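/- arXiv:0710.4870 — 5 statements merged into one kernel-verified Lean document; each statement's English description precedes it below -/
import Mathlib

section
/- Let T be a convex spherical polytope in Sⁿ⁻¹ ⊆ ℝⁿ, H = {x : x₁ = 0}, and f = 𝟙_{int T} the indicator of the interior of T. Then for almost every point y = (y₂,…,yₙ) with (0,y₂,…,yₙ) ∈ Sⁿ⁻¹, the limit f₀⁺(y) := lim_{m→∞} f(2^{-m}, y₂,…,yₙ) exists; moreover f₀⁺ equals (almost everywhere) the indicator of the relative interior of T ∩ H if T has interior points with nonnegative first coordinate, and equals 0 otherwise. -/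
open Set Metric Filter MeasureTheory
open scoped RealInnerProductSpace Topology Classical NNReal ENNReal

noncomputable section

abbrev Euc (n : ℕ) : Type := EuclideanSpace ℝ (Fin n)

def unitSphere (n : ℕ) : Set (Euc n) := Metric.sphere 0 1

/-- The relative interior of `A` within the ambient set `S`. -/
def relIntIn {n : ℕ} (A S : Set (Euc n)) : Set (Euc n) :=
  {x | x ∈ A ∧ ∃ ε > 0, ∀ y ∈ S, dist y x < ε → y ∈ A}

/-! ### Auxiliary lemmas -/

lemma aux_euc_sphere_null (m : ℕ) : (μH[(m:ℝ)] (sphere (0 : Euc m) 1)) = 0 := by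
  rcases Nat.eq_zero_or_pos m with hm | hm
  · subst hm
    have : (sphere (0: EuclideanSpace ℝ (Fin 0)) 1) = ∅ := by
      ext x
      simp [Subsingleton.elim x 0]
    simp [this]
  · haveI : Nonempty (Fin m) := ⟨⟨0, hm⟩⟩
    haveI : Nontrivial (EuclideanSpace ℝ (Fin m)) := by
      refine ⟨0, EuclideanSpace.single ⟨0,hm⟩ 1, fun h => ?_⟩
      have := congrArg (fun v : EuclideanSpace ℝ (Fin m) => v ⟨0,hm⟩) h.symm
      simp [EuclideanSpace.single_apply] at this
    set e := (MeasurableEquiv.toLp 2 (Fin m → ℝ)).symm with he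
    have h3 : LipschitzWith ((Fintype.card (Fin m) : ℝ≥0) ^ ((1:ℝ≥0∞)/2).toReal)
        (@WithLp.toLp 2 (∀ _ : Fin m, ℝ)) :=
      PiLp.lipschitzWith_toLp 2 (fun _ : Fin m => ℝ)
    have key : ∀ s : Set (EuclideanSpace ℝ (Fin m)), MeasurableSet s → volume s = 0 →
        μH[(m:ℝ)] s = 0 := by
      intro s hsm hs0
      have him : s = (@WithLp.toLp 2 (∀ _ : Fin m, ℝ))
          '' ((@WithLp.ofLp 2 (∀ _ : Fin m, ℝ)) '' s) := by
        simp [Set.image_image]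
      have hle := h3.hausdorffMeasure_image_le (d := (m:ℝ)) (by positivity)
        ((@WithLp.ofLp 2 (∀ _ : Fin m, ℝ)) '' s)
      rw [← him] at hle
      have hpi : (μH[(m:ℝ)] : Measure (∀ _ : Fin m, ℝ)) = volume := by
        have := hausdorffMeasure_pi_real (ι := Fin m)
        simpa using this
      rw [hpi] at hle
      have : volume ((@WithLp.ofLp 2 (∀ _ : Fin m, ℝ)) '' s) = volume s := by
        show volume (e '' s) = volume s
        rw [MeasurableEquiv.image_eq_preimage_symm]
        exact (EuclideanSpace.volume_preserving_symm_measurableEquiv_toLp (Fin m)).symm e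
          |>.measure_preimage hsm.nullMeasurableSet
      rw [this, hs0, mul_zero] at hle
      exact le_antisymm hle (zero_le)
    exact key _ (isClosed_sphere.measurableSet) (MeasureTheory.Measure.addHaar_sphere volume 0 1)

lemma aux_bad_null (n : ℕ) (c : Euc (n+1))
    (hc : c - (c 0) • EuclideanSpace.single (0 : Fin (n+1)) (1:ℝ) ≠ 0) :
    μH[((n:ℝ)-1)] {x : Euc (n+1) | ‖x‖ = 1 ∧ x 0 = 0 ∧ ⟪c, x⟫ = 0} = 0 := by
  set e₀ : Euc (n+1) := EuclideanSpace.single (0 : Fin (n+1)) (1:ℝ) with he₀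
  set c' : Euc (n+1) := c - (c 0) • e₀ with hc'
  have hc'0 : c' 0 = 0 := by
    simp [hc', he₀, EuclideanSpace.single_apply]
  have he₀0 : e₀ 0 = 1 := by simp [he₀, EuclideanSpace.single_apply]
  have hli : LinearIndependent ℝ ![e₀, c'] := by
    rw [LinearIndependent.pair_iff]
    intro s t hst
    have h0 : (s • e₀ + t • c') 0 = 0 := by rw [hst]; rfl
    have hs : s = 0 := by
      have : s * e₀ 0 + t * c' 0 = 0 := h0
      rwa [he₀0, hc'0, mul_one, mul_zero, add_zero] at this
    refine ⟨hs, ?_⟩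
    rw [hs, zero_smul, zero_add] at hst
    rcases smul_eq_zero.1 hst with h | h
    · exact h
    · exact absurd h hc
  have hrange : Set.range ![e₀, c'] = {e₀, c'} := by
    ext x
    constructor
    · rintro ⟨i, rfl⟩
      fin_cases i <;> simp
    · rintro (rfl | rfl)
      exacts [⟨0, rfl⟩, ⟨1, rfl⟩]
  set p : Submodule ℝ (Euc (n+1)) := Submodule.span ℝ {e₀, c'} with hp
  have hfp : Module.finrank ℝ p = 2 := by
    rw [hp, ← hrange, finrank_span_eq_card hli]
    simp
  have hn1 : 2 ≤ n + 1 := by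
    have := hli.fintype_card_le_finrank (R := ℝ)
    simpa [finrank_euclideanSpace_fin] using this
  set W := pᗮ with hW
  have hfW : Module.finrank ℝ W = n - 1 := by
    have h2 := Submodule.finrank_add_finrank_orthogonal (K := p)
    rw [hfp, finrank_euclideanSpace_fin, ← hW] at h2
    omega
  set m := Module.finrank ℝ W with hm
  set J : Euc m →ₗᵢ[ℝ] Euc (n+1) :=
    W.subtypeₗᵢ.comp (stdOrthonormalBasis ℝ W).repr.symm.toLinearIsometry with hJ
  have hsub : {x : Euc (n+1) | ‖x‖ = 1 ∧ x 0 = 0 ∧ ⟪c, x⟫ = 0} ⊆ J '' (sphere 0 1) := by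
    rintro x ⟨hx1, hx0, hxc⟩
    have hxW : x ∈ W := by
      rw [hW, Submodule.mem_orthogonal]
      intro u hu
      induction hu using Submodule.span_induction with
      | mem u hu =>
        rcases hu with rfl | rfl
        · simpa [he₀, EuclideanSpace.inner_single_left] using hx0
        · have : ⟪c', x⟫ = ⟪c, x⟫ - c 0 * ⟪e₀, x⟫ := by
            simp [hc', inner_sub_left, inner_smul_left]
          rw [this, hxc]
          simp [he₀, EuclideanSpace.inner_single_left, hx0]
      | zero => simp
      | add u v hu hv ihu ihv => simp [inner_add_left, ihu, ihv]
      | smul a u hu ihu => simp [inner_smul_left, ihu]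
    refine ⟨(stdOrthonormalBasis ℝ W).repr ⟨x, hxW⟩, ?_, ?_⟩
    · simp [mem_sphere_iff_norm, hx1]
    · simp [hJ]
  refine le_antisymm ?_ (zero_le)
  calc μH[((n:ℝ)-1)] {x : Euc (n+1) | ‖x‖ = 1 ∧ x 0 = 0 ∧ ⟪c, x⟫ = 0}
      ≤ μH[((n:ℝ)-1)] (J '' (sphere 0 1)) := measure_mono hsub
    _ = μH[((n:ℝ)-1)] (sphere (0 : Euc m) 1) := by
        refine J.isometry.hausdorffMeasure_image (Or.inl ?_) _
        have : (1:ℝ) ≤ (n:ℝ) := by exact_mod_cast Nat.one_le_iff_ne_zero.2 (by omega)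
        linarith
    _ = 0 := by
        have hcast : ((n:ℝ) - 1) = ((m:ℕ):ℝ) := by
          rw [show ((m:ℕ):ℝ) = ((n-1:ℕ):ℝ) by rw [hfW]]
          push_cast [Nat.cast_sub (by omega : 1 ≤ n)]
          ring
        rw [hcast]
        exact aux_euc_sphere_null m

lemma aux_interiorK (n : ℕ) (C : Finset (Euc n)) :
    interior (⋂ c ∈ C, {y : Euc n | 0 ≤ ⟪c, y⟫})
      = {y : Euc n | ∀ c ∈ C, c ≠ 0 → 0 < ⟪c, y⟫} := by
  apply subset_antisymm
  · intro y hy c hc hc0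
    rw [mem_interior_iff_mem_nhds, Metric.mem_nhds_iff] at hy
    obtain ⟨ε, hε, hball⟩ := hy
    have hnc : 0 < ‖c‖ := norm_pos_iff.2 hc0
    set δ := ε / (2 * ‖c‖) with hδdef
    have hδ : 0 < δ := by positivity
    have hmem : y - δ • c ∈ ball y ε := by
      rw [mem_ball, dist_eq_norm]
      have : y - δ • c - y = -(δ • c) := by abel
      rw [this, norm_neg, norm_smul, Real.norm_eq_abs, abs_of_pos hδ, hδdef]
      rw [div_mul_eq_mul_div, div_lt_iff₀ (by positivity)]
      nlinarith
    have hK := hball hmem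
    rw [Set.mem_iInter₂] at hK
    have h0 := hK c hc
    have hinner : ⟪c, y - δ • c⟫ = ⟪c, y⟫ - δ * ‖c‖^2 := by
      rw [inner_sub_right, real_inner_smul_right, real_inner_self_eq_norm_sq]
    rw [Set.mem_setOf_eq, hinner] at h0
    have hpos : 0 < δ * ‖c‖^2 := by positivity
    linarith
  · apply interior_maximal
    · intro y hy
      rw [Set.mem_iInter₂]
      intro c hc
      by_cases h : c = 0
      · simp [h]
      · exact le_of_lt (hy c hc h)
    · have hrw : {y : Euc n | ∀ c ∈ C, c ≠ 0 → 0 < ⟪c, y⟫}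
          = ⋂ c ∈ C, {y : Euc n | c ≠ 0 → 0 < ⟪c, y⟫} := by
        ext y; simp
      rw [hrw]
      refine isOpen_biInter_finset fun c hc => ?_
      by_cases h : c = 0
      · simp [h]
      · have : {y : Euc n | c ≠ 0 → 0 < ⟪c, y⟫} = (fun y => ⟪c, y⟫) ⁻¹' (Set.Ioi 0) := by
          ext y; simp [h]
        rw [this]
        exact isOpen_Ioi.preimage (innerSL ℝ c).continuous


lemma aux_approach (n : ℕ) (z : Euc (n+1)) (hz1 : ‖z‖ = 1) :
    Tendsto (fun δ : ℝ => ‖z + δ • EuclideanSpace.single (0 : Fin (n+1)) (1:ℝ)‖⁻¹ •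
      (z + δ • EuclideanSpace.single (0 : Fin (n+1)) (1:ℝ))) (𝓝 0) (𝓝 z) := by
  set e₀ : Euc (n+1) := EuclideanSpace.single (0 : Fin (n+1)) (1:ℝ)
  have h1 : Tendsto (fun δ : ℝ => z + δ • e₀) (𝓝 0) (𝓝 z) := by
    have h2 : Tendsto (fun δ : ℝ => z + δ • e₀) (𝓝 0) (𝓝 (z + (0:ℝ) • e₀)) :=
      ((continuous_const.add ((continuous_id : Continuous (id : ℝ → ℝ)).smul
        continuous_const)).tendsto 0)
    simpa using h2
  have h2 : Tendsto (fun δ : ℝ => ‖z + δ • e₀‖⁻¹) (𝓝 0) (𝓝 1) := by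
    have := (h1.norm).inv₀ (by simp [hz1])
    simpa [hz1] using this
  have := h2.smul h1
  simpa using this

/-- Let `T = S ∩ ⋂ c ∈ C, {y : c·y ≥ 0}` be a convex spherical polytope in the unit
sphere `S` of `ℝ^{n+1}`, `H = {x : x₀ = 0}`, and `f` the (radially extended) indicator
of the interior of `T`. For almost every `x ∈ S ∩ H` the one-sided limit
`f₀⁺(x) = lim_m f(x + 2⁻ᵐ e₀)` exists; it equals the indicator of the relative interior
of `T ∩ H` (in `S ∩ H`) if `T` has interior points with nonnegative first coordinate,
and `0` otherwise. -/
theorem indicator_one_sided_limit (n : ℕ) (C : Finset (Euc (n + 1)))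
    (K T H : Set (Euc (n + 1)))
    (hK : K = ⋂ c ∈ C, {y : Euc (n + 1) | 0 ≤ ⟪c, y⟫})
    (hT : T = unitSphere (n + 1) ∩ K)
    (hH : H = {y : Euc (n + 1) | y 0 = 0})
    (f : Euc (n + 1) → ℝ) (hf : f = Set.indicator (interior K) (fun _ => (1 : ℝ))) :
    ∀ᵐ x ∂(μH[((n : ℝ) - 1)] : Measure (Euc (n + 1))),
      x ∈ unitSphere (n + 1) ∩ H →
        Tendsto (fun m : ℕ => f (x + ((1 : ℝ) / 2) ^ m • EuclideanSpace.single (0 : Fin (n + 1)) (1 : ℝ)))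
          atTop
          (𝓝 (if ∃ z ∈ relIntIn T (unitSphere (n + 1)), 0 ≤ z 0 then
                Set.indicator (relIntIn (T ∩ H) (unitSphere (n + 1) ∩ H)) (fun _ => (1 : ℝ)) x
              else 0)) := by
  subst hK hT hH hf
  set e₀ : Euc (n+1) := EuclideanSpace.single (0 : Fin (n+1)) (1:ℝ) with he₀
  set S : Set (Euc (n+1)) := unitSphere (n+1) with hS
  set K : Set (Euc (n+1)) := ⋂ c ∈ C, {y : Euc (n + 1) | 0 ≤ ⟪c, y⟫} with hKdef
  set H : Set (Euc (n+1)) := {y : Euc (n + 1) | y 0 = 0} with hHdef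
  have hKint : interior K = {y : Euc (n+1) | ∀ c ∈ C, c ≠ 0 → 0 < ⟪c, y⟫} :=
    aux_interiorK (n+1) C
  have hmemK : ∀ y : Euc (n+1), y ∈ K ↔ ∀ c ∈ C, 0 ≤ ⟪c, y⟫ := by
    intro y; rw [hKdef, Set.mem_iInter₂]; rfl
  have hinner_e₀ : ∀ y : Euc (n+1), ⟪y, e₀⟫ = y 0 := by
    intro y; rw [he₀, EuclideanSpace.inner_single_right]; simp
  have hinner_seq : ∀ (c x : Euc (n+1)) (t : ℝ), ⟪c, x + t • e₀⟫ = ⟪c, x⟫ + t * c 0 := by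
    intro c x t
    rw [inner_add_right, real_inner_smul_right, hinner_e₀]
  have hcoord : ∀ (x : Euc (n+1)) (t : ℝ), (x + t • e₀) 0 = x 0 + t := by
    intro x t
    simp [he₀, PiLp.add_apply, PiLp.smul_apply, EuclideanSpace.single_apply]
  have hcsub : ∀ c : Euc (n+1), c - (c 0) • e₀ ≠ 0 → c ≠ 0 := by
    intro c h h0; exact h (by simp [h0])
  have htpos : ∀ m : ℕ, (0:ℝ) < ((1:ℝ)/2)^m := fun m => pow_pos (by norm_num) m
  have htlim : Tendsto (fun m : ℕ => ((1:ℝ)/2)^m) atTop (𝓝 0) :=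
    tendsto_pow_atTop_nhds_zero_of_lt_one (by norm_num) (by norm_num)
  -- the a.e. genericity statement
  have hae : ∀ᵐ x ∂(μH[((n:ℝ)-1)] : Measure (Euc (n+1))),
      ∀ c ∈ C, c - (c 0) • e₀ ≠ 0 → ¬(‖x‖ = 1 ∧ x 0 = 0 ∧ ⟪c, x⟫ = 0) := by
    rw [eventually_all_finset]
    intro c hc
    by_cases h : c - (c 0) • e₀ = 0
    · filter_upwards with x h' 
      exact absurd h h'
    · have hnull := aux_bad_null n c h
      filter_upwards [measure_eq_zero_iff_ae_notMem.1 hnull] with x hx _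
      exact hx
  filter_upwards [hae] with x hgen hx
  obtain ⟨hxS, hxH⟩ := hx
  have hx1 : ‖x‖ = 1 := by
    have : x ∈ Metric.sphere (0 : Euc (n+1)) 1 := hxS
    simpa [mem_sphere_iff_norm] using this
  have hx0 : x 0 = 0 := hxH
  have hgen' : ∀ c ∈ C, c - (c 0) • e₀ ≠ 0 → ⟪c, x⟫ ≠ 0 := by
    intro c hc h heq
    exact hgen c hc h ⟨hx1, hx0, heq⟩
  have hczero : ∀ c : Euc (n+1), c - (c 0) • e₀ = 0 → ∀ y : Euc (n+1), y 0 = 0 → ⟪c, y⟫ = 0 := by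
    intro c h y hy
    have hceq : c = (c 0) • e₀ := by rwa [sub_eq_zero] at h
    rw [hceq, real_inner_smul_left, real_inner_comm, hinner_e₀, hy, mul_zero]
  by_cases hQ : ∃ c ∈ C, c - (c 0) • e₀ = 0 ∧ c 0 < 0
  -- Case A : some constraint is {y₀ ≤ 0}; limit 0, and `if` condition fails
  · obtain ⟨c, hcC, hc', hcneg⟩ := hQ
    obtain ⟨a, rfl⟩ : ∃ a : ℝ, c = a • e₀ := ⟨c 0, sub_eq_zero.1 hc'⟩
    have ha0 : (a • e₀) 0 = a := by
      simp [he₀, PiLp.smul_apply, EuclideanSpace.single_apply]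
    rw [ha0] at hcneg
    have hcne0 : a • e₀ ≠ 0 := by
      intro h0
      have h1 : (a • e₀) 0 = 0 := by rw [h0]; rfl
      rw [ha0] at h1
      exact hcneg.ne h1
    have hinn_ae : ∀ y : Euc (n+1), ⟪a • e₀, y⟫ = a * y 0 := by
      intro y
      rw [real_inner_smul_left, real_inner_comm, hinner_e₀]
    have hfz : ∀ m : ℕ, Set.indicator (interior K) (fun _ => (1:ℝ))
        (x + ((1:ℝ)/2)^m • e₀) = 0 := by
      intro m
      apply Set.indicator_of_notMem
      rw [hKint]
      intro hmem
      have h2 := hmem _ hcC hcne0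
      rw [hinn_ae, hcoord, hx0, zero_add] at h2
      nlinarith [htpos m]
    have hP : ¬ ∃ z ∈ relIntIn (S ∩ K) S, 0 ≤ z 0 := by
      rintro ⟨z, ⟨⟨hzS, hzK⟩, ε, hε, hclose⟩, hz0⟩
      have hz1 : ‖z‖ = 1 := by
        have : z ∈ Metric.sphere (0 : Euc (n+1)) 1 := hzS
        simpa [mem_sphere_iff_norm] using this
      have hinz : 0 ≤ ⟪a • e₀, z⟫ := (hmemK z).1 hzK _ hcC
      rw [hinn_ae] at hinz
      have hz00 : z 0 = 0 := by
        by_contra hne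
        have hzpos : 0 < z 0 := lt_of_le_of_ne hz0 (Ne.symm hne)
        nlinarith
      -- approach z from the positive side
      have happ := aux_approach n z hz1
      have hball : ∀ᶠ δ in 𝓝[>] (0:ℝ),
          dist (‖z + δ • e₀‖⁻¹ • (z + δ • e₀)) z < ε := by
        have h1 := happ.eventually_mem (Metric.ball_mem_nhds z hε)
        filter_upwards [nhdsWithin_le_nhds h1] with δ hδ
        exact mem_ball.1 hδ
      obtain ⟨δ, hδdist, hδpos'⟩ := (hball.and eventually_mem_nhdsWithin).exists
      have hδpos : 0 < δ := Set.mem_Ioi.1 hδpos' 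
      set v : Euc (n+1) := z + δ • e₀ with hv
      have hv0 : v 0 = δ := by rw [hv, hcoord, hz00, zero_add]
      have hvne : v ≠ 0 := by
        intro h
        rw [h] at hv0
        simp at hv0
        exact (lt_irrefl _ (hv0 ▸ hδpos))
      have hvnorm : 0 < ‖v‖ := norm_pos_iff.2 hvne
      set w : Euc (n+1) := ‖v‖⁻¹ • v with hw
      have hw1 : ‖w‖ = 1 := by
        rw [hw, norm_smul, Real.norm_eq_abs, abs_of_pos (inv_pos.2 hvnorm),
          inv_mul_cancel₀ hvnorm.ne']
      have hwS : w ∈ S := by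
        rw [hS, unitSphere]
        exact mem_sphere_zero_iff_norm.2 hw1
      have hwT := hclose w hwS hδdist
      have hwK : 0 ≤ ⟪a • e₀, w⟫ := (hmemK w).1 hwT.2 _ hcC
      rw [hinn_ae] at hwK
      have hw0 : w 0 = ‖v‖⁻¹ * δ := by
        rw [hw, PiLp.smul_apply, smul_eq_mul, hv0]
      rw [hw0] at hwK
      exact absurd hwK (not_le.2 (mul_neg_of_neg_of_pos hcneg
        (mul_pos (inv_pos.2 hvnorm) hδpos)))
    rw [if_neg hP]
    exact tendsto_const_nhds.congr fun m => (hfz m).symm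
  -- Case B : every pure-e₀ constraint has nonnegative coefficient
  · push_neg at hQ
    by_cases hB1 : ∀ c ∈ C, c - (c 0) • e₀ ≠ 0 → 0 < ⟪c, x⟫
    -- Case B1 : limit 1
    · have hev : ∀ᶠ m : ℕ in atTop, (x + ((1:ℝ)/2)^m • e₀) ∈ interior K := by
        rw [hKint]
        have hev' : ∀ᶠ m : ℕ in atTop, ∀ c ∈ C, c ≠ 0 → 0 < ⟪c, x + ((1:ℝ)/2)^m • e₀⟫ := by
          rw [eventually_all_finset]
          intro c hcC
          by_cases hc0 : c = 0
          · filter_upwards with m hc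
            exact absurd hc0 hc
          · by_cases h' : c - (c 0) • e₀ = 0
            · have hpos : 0 < c 0 := by
                rcases lt_or_eq_of_le (hQ c hcC h') with h | h
                · exact h
                · exfalso
                  apply hc0
                  have := sub_eq_zero.1 h'
                  rw [this, ← h, zero_smul]
              filter_upwards with m _
              rw [hinner_seq, hczero c h' x hx0, zero_add]
              exact mul_pos (htpos m) hpos
            · have hpos := hB1 c hcC h'
              have hlim : Tendsto (fun m : ℕ => (⟪c, x⟫ : ℝ) + ((1:ℝ)/2)^m * c 0) atTop
                  (𝓝 ((⟪c, x⟫ : ℝ) + 0 * c 0)) := (htlim.mul_const (c 0)).const_add _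
              rw [zero_mul, add_zero] at hlim
              filter_upwards [hlim.eventually (eventually_gt_nhds hpos)] with m hm _
              rw [hinner_seq]
              exact hm
        filter_upwards [hev'] with m hm
        exact hm
      have hone : Tendsto (fun m : ℕ => Set.indicator (interior K) (fun _ => (1:ℝ))
          (x + ((1:ℝ)/2)^m • e₀)) atTop (𝓝 1) := by
        refine Tendsto.congr' ?_ tendsto_const_nhds
        filter_upwards [hev] with m hm
        exact (Set.indicator_of_mem hm fun _ => (1:ℝ)).symm
      -- the `if` condition holds
      obtain ⟨m₀, hm₀⟩ := hev.exists
      set t : ℝ := ((1:ℝ)/2)^m₀ with ht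
      set v : Euc (n+1) := x + t • e₀ with hv
      have hv0 : v 0 = t := by rw [hv, hcoord, hx0, zero_add]
      have hvne : v ≠ 0 := by
        intro h
        rw [h] at hv0
        simp at hv0
        exact (htpos m₀).ne hv0
      have hvnorm : 0 < ‖v‖ := norm_pos_iff.2 hvne
      set w : Euc (n+1) := ‖v‖⁻¹ • v with hw
      have hw1 : ‖w‖ = 1 := by
        rw [hw, norm_smul, Real.norm_eq_abs, abs_of_pos (inv_pos.2 hvnorm),
          inv_mul_cancel₀ hvnorm.ne']
      have hwS : w ∈ S := by
        rw [hS, unitSphere]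
        exact mem_sphere_zero_iff_norm.2 hw1
      have hwint : w ∈ interior K := by
        rw [hKint]
        intro c hcC hc0
        have h2 : 0 < ⟪c, v⟫ := by
          have := (hKint ▸ hm₀) c hcC hc0
          exact this
        rw [hw, real_inner_smul_right]
        exact mul_pos (inv_pos.2 hvnorm) h2
      have hP : ∃ z ∈ relIntIn (S ∩ K) S, 0 ≤ z 0 := by
        refine ⟨w, ⟨⟨hwS, interior_subset hwint⟩, ?_⟩, ?_⟩
        · obtain ⟨ε, hε, hball⟩ := Metric.isOpen_iff.1 isOpen_interior w hwint
          refine ⟨ε, hε, fun y hyS hyd => ⟨hyS, interior_subset (hball (mem_ball.2 hyd))⟩⟩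
        · rw [hw, PiLp.smul_apply, smul_eq_mul, hv0]
          positivity
      rw [if_pos hP]
      -- x is in the relative interior of T ∩ H
      have hUopen : IsOpen {y : Euc (n+1) | ∀ c ∈ C, c - (c 0) • e₀ ≠ 0 → 0 < ⟪c, y⟫} := by
        have hrw : {y : Euc (n+1) | ∀ c ∈ C, c - (c 0) • e₀ ≠ 0 → 0 < ⟪c, y⟫}
            = ⋂ c ∈ C, {y : Euc (n+1) | c - (c 0) • e₀ ≠ 0 → 0 < ⟪c, y⟫} := by
          ext y; simp
        rw [hrw]
        refine isOpen_biInter_finset fun c hc => ?_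
        by_cases h : c - (c 0) • e₀ = 0
        · simp [h]
        · have : {y : Euc (n+1) | c - (c 0) • e₀ ≠ 0 → 0 < ⟪c, y⟫}
              = (fun y => ⟪c, y⟫) ⁻¹' (Set.Ioi 0) := by
            ext y; simp [h]
          rw [this]
          exact isOpen_Ioi.preimage (innerSL ℝ c).continuous
      have hxU : x ∈ {y : Euc (n+1) | ∀ c ∈ C, c - (c 0) • e₀ ≠ 0 → 0 < ⟪c, y⟫} := hB1
      obtain ⟨ε, hε, hball⟩ := Metric.isOpen_iff.1 hUopen x hxU
      have hxRI : x ∈ relIntIn ((S ∩ K) ∩ H) (S ∩ H) := by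
        refine ⟨⟨⟨hxS, ?_⟩, hxH⟩, ε, hε, ?_⟩
        · rw [hmemK]
          intro c hcC
          by_cases h' : c - (c 0) • e₀ = 0
          · rw [hczero c h' x hx0]
          · exact le_of_lt (hB1 c hcC h')
        · rintro y ⟨hyS, hyH⟩ hyd
          have hyU := hball (mem_ball.2 hyd)
          refine ⟨⟨hyS, ?_⟩, hyH⟩
          rw [hmemK]
          intro c hcC
          by_cases h' : c - (c 0) • e₀ = 0
          · rw [hczero c h' y hyH]
          · exact le_of_lt (hyU c hcC h')
      rw [Set.indicator_of_mem hxRI]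
      exact hone
    -- Case B2 : limit 0 and x not in the relative interior
    · push_neg at hB1
      obtain ⟨c, hcC, hc', hcle⟩ := hB1
      have hcneg : ⟪c, x⟫ < 0 := lt_of_le_of_ne hcle (hgen' c hcC hc')
      have hcne0 : c ≠ 0 := hcsub c hc'
      have hev0 : ∀ᶠ m : ℕ in atTop, (x + ((1:ℝ)/2)^m • e₀) ∉ interior K := by
        have hlim : Tendsto (fun m : ℕ => (⟪c, x⟫ : ℝ) + ((1:ℝ)/2)^m * c 0) atTop
            (𝓝 ((⟪c, x⟫ : ℝ) + 0 * c 0)) := (htlim.mul_const (c 0)).const_add _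
        rw [zero_mul, add_zero] at hlim
        filter_upwards [hlim.eventually (eventually_lt_nhds hcneg)] with m hm hmem
        rw [hKint] at hmem
        have := hmem c hcC hcne0
        rw [hinner_seq] at this
        linarith
      have hzero : Tendsto (fun m : ℕ => Set.indicator (interior K) (fun _ => (1:ℝ))
          (x + ((1:ℝ)/2)^m • e₀)) atTop (𝓝 0) := by
        refine Tendsto.congr' ?_ tendsto_const_nhds
        filter_upwards [hev0] with m hm
        exact (Set.indicator_of_notMem hm fun _ => (1:ℝ)).symm
      have hxnot : x ∉ relIntIn ((S ∩ K) ∩ H) (S ∩ H) := by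
        rintro ⟨⟨⟨_, hxK⟩, _⟩, _⟩
        have := (hmemK x).1 hxK c hcC
        linarith
      split_ifs with hP
      · rw [Set.indicator_of_notMem hxnot]
        exact hzero
      · exact hzero

end
end

section
/- There is no finite tiling of the sphere Sⁿ⁻¹ by convex spherical polytopes that contains exactly one A-type polytope; equivalently, in any partition of Sⁿ⁻¹ into convex spherical polytopes with pairwise disjoint interiors, the number of A-type polytopes is never equal to one. -/
open Set Metric
open scoped RealInnerProductSpace

noncomputable section

/-- A convex spherical polytope: the intersection of the unit sphere with finitely many
closed halfspaces whose boundary hyperplanes pass through the origin. -/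
def IsSphPolytope {n : ℕ} (Q : Set (Euc n)) : Prop :=
  ∃ C : Finset (Euc n), Q = unitSphere n ∩ ⋂ c ∈ C, {y : Euc n | 0 ≤ ⟪c, y⟫}

/-- The relative interior of a subset of the unit sphere, in the sphere. -/
def sphInterior {n : ℕ} (Q : Set (Euc n)) : Set (Euc n) :=
  {x | x ∈ Q ∧ ∃ ε > 0, ∀ y ∈ unitSphere n, dist y x < ε → y ∈ Q}

/-- A B-type set contains a pair of antipodal points of the sphere. -/
def IsBType {n : ℕ} (Q : Set (Euc n)) : Prop := ∃ x ∈ Q, -x ∈ Q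

/-- A finite tiling of the sphere by full-dimensional convex spherical polytopes with
pairwise disjoint (relative) interiors. -/
def IsSphTiling {n : ℕ} (𝒯 : Finset (Set (Euc n))) : Prop :=
  (∀ Q ∈ 𝒯, IsSphPolytope Q ∧ (sphInterior Q).Nonempty) ∧
  (⋃ Q ∈ 𝒯, Q) = unitSphere n ∧
  ∀ Q ∈ 𝒯, ∀ Q' ∈ 𝒯, Q ≠ Q' → sphInterior Q ∩ sphInterior Q' = ∅

-- ============================================================
-- Auxiliary development
-- ============================================================
namespace SphTile
open Module
open scoped Classical

variable {V : Type} [NormedAddCommGroup V] [InnerProductSpace ℝ V]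

/-- The polyhedral cone cut out by a finite set of linear inequalities. -/
def repSet (C : Finset V) : Set V := {y | ∀ c ∈ C, 0 ≤ ⟪c, y⟫}

/-- A polyhedral cone. -/
def IsPC (K : Set V) : Prop := ∃ C : Finset V, K = repSet C

/-- Pointedness of a cone. -/
def Ptd (K : Set V) : Prop := ∀ y ∈ K, -y ∈ K → y = 0

/-- Tangent cone of `K` at `w` (directions entering `K`). -/
def Tang (K : Set V) (w : V) : Set V := {y | ∃ ε : ℝ, 0 < ε ∧ w + ε • y ∈ K}

/-- Tangent cone viewed inside a subspace `W`. -/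
def TangIn (W : Submodule ℝ V) (w : V) (K : Set V) : Set W := {y | (y : V) ∈ Tang K w}

/-- The tangent tiling of a tiling at a point `w`, living in `W`. -/
def TangT (W : Submodule ℝ V) (w : V) (T : Finset (Set V)) : Finset (Set W) :=
  (T.filter fun K => w ∈ K).image (TangIn W w)

/-- Strict solutions of the inequalities. -/
def strictSet (C : Finset V) : Set V := {y | ∀ c ∈ C, c ≠ 0 → 0 < ⟪c, y⟫}

/-- A tiling of the whole space by full-dimensional polyhedral cones. -/
def IsConeTiling (T : Finset (Set V)) : Prop :=
  (∀ K ∈ T, IsPC K ∧ (interior K).Nonempty) ∧ (⋃ K ∈ T, K) = univ ∧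
    ∀ K ∈ T, ∀ K' ∈ T, K ≠ K' → interior K ∩ interior K' = ∅

/-- Signed count of pointed membership. -/
def cnt (L : List (Finset (Set V) × ℤ)) (K : Set V) : ℤ :=
  (L.map fun Tε => if K ∈ Tε.1 ∧ Ptd K then Tε.2 else 0).sum

lemma mem_repSet {C : Finset V} {y : V} : y ∈ repSet C ↔ ∀ c ∈ C, 0 ≤ ⟪c, y⟫ := Iff.rfl

lemma zero_mem_repSet (C : Finset V) : (0:V) ∈ repSet C := fun c _ => by simp

lemma add_mem_repSet {C : Finset V} {x y : V} (hx : x ∈ repSet C) (hy : y ∈ repSet C) :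
    x + y ∈ repSet C := fun c hc => by
  rw [inner_add_right]; exact add_nonneg (hx c hc) (hy c hc)

lemma smul_mem_repSet {C : Finset V} {t : ℝ} (ht : 0 ≤ t) {y : V} (hy : y ∈ repSet C) :
    t • y ∈ repSet C := fun c hc => by
  rw [real_inner_smul_right]; exact mul_nonneg ht (hy c hc)

lemma repSet_eq_iInter (C : Finset V) :
    repSet C = ⋂ c ∈ C, {y : V | 0 ≤ ⟪c, y⟫} := by
  ext y; simp [repSet]

lemma isClosed_repSet (C : Finset V) : IsClosed (repSet C) := by
  rw [repSet_eq_iInter]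
  exact isClosed_biInter fun c _ => isClosed_le continuous_const (continuous_const.inner continuous_id)

lemma isOpen_strictSet (C : Finset V) : IsOpen (strictSet C) := by
  have : strictSet C = ⋂ c ∈ (C.filter fun c => c ≠ 0), {y : V | 0 < ⟪c, y⟫} := by
    ext y
    simp only [strictSet, mem_iInter, Finset.mem_filter, mem_setOf_eq]
    exact ⟨fun h c hc => h c hc.1 hc.2, fun h c hc hc0 => h c ⟨hc, hc0⟩⟩
  rw [this]
  exact isOpen_biInter_finset fun c _ =>
    isOpen_lt continuous_const (continuous_const.inner continuous_id)

lemma strictSet_subset (C : Finset V) : strictSet C ⊆ repSet C := by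
  intro y hy c hc
  rcases eq_or_ne c 0 with rfl | h0
  · simp
  · exact le_of_lt (hy c hc h0)

lemma interior_repSet (C : Finset V) : interior (repSet C) = strictSet C := by
  apply Subset.antisymm
  · intro x hx c hc hc0
    obtain ⟨δ, hδ, hball⟩ := Metric.isOpen_iff.1 isOpen_interior x hx
    have hc2 : 0 < ‖c‖ := norm_pos_iff.2 hc0
    have hmem : x - (δ / (2 * ‖c‖)) • c ∈ repSet C := by
      apply interior_subset
      apply hball
      rw [mem_ball_iff_norm]
      have : x - (δ / (2 * ‖c‖)) • c - x = -((δ / (2 * ‖c‖)) • c) := by abel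
      rw [this, norm_neg, norm_smul, Real.norm_eq_abs,
        abs_of_pos (by positivity : (0:ℝ) < δ / (2 * ‖c‖))]
      rw [div_mul_eq_mul_div, div_lt_iff₀ (by positivity)]
      nlinarith
    have h2 := hmem c hc
    rw [inner_sub_right, real_inner_smul_right, real_inner_self_eq_norm_sq] at h2
    have hpos : 0 < δ / (2 * ‖c‖) * (‖c‖ * ‖c‖) := by positivity
    nlinarith [h2]
  · rw [← (isOpen_strictSet C).interior_eq]
    exact interior_mono (strictSet_subset C)

lemma repSet_univ_of_mem_interior {C : Finset V} (h : (0:V) ∈ interior (repSet C)) :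
    repSet C = univ := by
  obtain ⟨δ, hδ, hball⟩ := Metric.isOpen_iff.1 isOpen_interior 0 h
  apply eq_univ_of_forall
  intro y
  rcases eq_or_ne y 0 with rfl | hy0
  · exact zero_mem_repSet C
  · have hn : 0 < ‖y‖ := norm_pos_iff.2 hy0
    have hmem : (δ / (2 * ‖y‖)) • y ∈ repSet C := by
      apply interior_subset; apply hball
      rw [mem_ball_iff_norm, sub_zero, norm_smul, Real.norm_eq_abs,
        abs_of_pos (by positivity : (0:ℝ) < δ / (2 * ‖y‖))]
      rw [div_mul_eq_mul_div, div_lt_iff₀ (by positivity)]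
      nlinarith
    have := smul_mem_repSet (t := (2 * ‖y‖)/δ) (by positivity) hmem
    rwa [smul_smul, div_mul_div_comm, mul_comm (2*‖y‖) δ, div_self (by positivity), one_smul]
      at this

/-- master epsilon lemma -/
lemma eps_master (C : Finset V) (w x : V) :
    ∃ ε₀ > (0:ℝ), ∀ ε : ℝ, 0 < ε → ε ≤ ε₀ → ∀ c ∈ C, 0 < ⟪c, w⟫ → 0 < ⟪c, w + ε • x⟫ := by
  classical
  induction C using Finset.cons_induction with
  | empty => exact ⟨1, one_pos, fun ε hε hε1 c hc => absurd hc (Finset.notMem_empty c)⟩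
  | cons a C ha ih =>
    obtain ⟨ε₀, hε₀, hC⟩ := ih
    by_cases haw : 0 < ⟪a, w⟫
    · refine ⟨min ε₀ (⟪a, w⟫ / (1 + |⟪a, x⟫|)), lt_min hε₀ (by positivity), ?_⟩
      intro ε hε hε1 c hc hcw
      rcases Finset.mem_cons.1 hc with rfl | hc
      · rw [inner_add_right, real_inner_smul_right]
        have h1 : ε ≤ ⟪c, w⟫ / (1 + |⟪c, x⟫|) := le_trans hε1 (min_le_right _ _)
        have h2 : ε * |⟪c, x⟫| ≤ ⟪c, w⟫ / (1 + |⟪c, x⟫|) * |⟪c, x⟫| :=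
          mul_le_mul_of_nonneg_right h1 (abs_nonneg _)
        have h3 : ⟪c, w⟫ / (1 + |⟪c, x⟫|) * |⟪c, x⟫| < ⟪c, w⟫ := by
          rw [div_mul_eq_mul_div, div_lt_iff₀ (by positivity)]
          nlinarith [abs_nonneg (⟪c, x⟫ : ℝ)]
        have h4 : -(ε * |⟪c, x⟫|) ≤ ε * ⟪c, x⟫ := by
          nlinarith [neg_abs_le (⟪c, x⟫ : ℝ), hε.le]
        linarith
      · exact hC ε hε (le_trans hε1 (min_le_left _ _)) c hc hcw
    · refine ⟨ε₀, hε₀, ?_⟩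
      intro ε hε hε1 c hc hcw
      rcases Finset.mem_cons.1 hc with rfl | hc
      · exact absurd hcw haw
      · exact hC ε hε hε1 c hc hcw

lemma tang_supset {C : Finset V} {w : V} (hw : w ∈ repSet C) :
    repSet C ⊆ Tang (repSet C) w := fun y hy =>
  ⟨1, one_pos, add_mem_repSet hw (by simpa using smul_mem_repSet zero_le_one hy)⟩

lemma mem_tang_iff_active {C : Finset V} {w : V} (hw : w ∈ repSet C) {y : V} :
    y ∈ Tang (repSet C) w ↔ ∀ c ∈ C, ⟪c, w⟫ = 0 → 0 ≤ ⟪c, y⟫ := by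
  constructor
  · rintro ⟨ε, hε, hm⟩ c hc hcw
    have := hm c hc
    rw [inner_add_right, real_inner_smul_right, hcw, zero_add] at this
    exact nonneg_of_mul_nonneg_right this hε
  · intro h
    obtain ⟨ε₀, hε₀, hmaster⟩ := eps_master C w y
    refine ⟨ε₀, hε₀, fun c hc => ?_⟩
    rcases (hw c hc).lt_or_eq with hlt | heq
    · exact (hmaster ε₀ hε₀ le_rfl c hc hlt).le
    · rw [inner_add_right, real_inner_smul_right, ← heq, zero_add]
      exact mul_nonneg hε₀.le (h c hc heq.symm)

lemma tang_poled {C : Finset V} {w : V} (hw : w ∈ repSet C) (hw' : -w ∈ repSet C) :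
    Tang (repSet C) w = repSet C := by
  apply Subset.antisymm _ (tang_supset hw)
  intro y hy c hc
  have hcw : ⟪c, w⟫ = 0 := by
    have h1 := hw c hc
    have h2 := hw' c hc
    rw [inner_neg_right] at h2
    linarith
  exact (mem_tang_iff_active hw).1 hy c hc hcw

variable [FiniteDimensional ℝ V]

/-- projected constraint system for the tangent cone in `W`. -/
def projC (W : Submodule ℝ V) (w : V) (C : Finset V) : Finset W :=
  ((C.filter fun c => ⟪c, w⟫ = 0).image fun c => Submodule.orthogonalProjectionOnto W c)

lemma inner_projC {W : Submodule ℝ V} (c : V) (y : W) :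
    ⟪Submodule.orthogonalProjectionOnto W c, y⟫ = ⟪c, (y:V)⟫ := by
  have h0 : ⟪(y:V), c - (Submodule.orthogonalProjectionOnto W c : V)⟫ = 0 :=
    (Submodule.mem_orthogonal W _).1 (Submodule.sub_starProjection_mem_orthogonal c) _ y.2
  rw [inner_sub_right] at h0
  rw [Submodule.coe_inner]
  have h1 := real_inner_comm (y:V) c
  have h2 := real_inner_comm (y:V) ((Submodule.orthogonalProjectionOnto W c : V))
  linarith

lemma tangIn_eq_repSet (W : Submodule ℝ V) {C : Finset V} {w : V} (hw : w ∈ repSet C) :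
    TangIn W w (repSet C) = repSet (projC W w C) := by
  ext y
  constructor
  · intro h d hd
    obtain ⟨c, hc, rfl⟩ := Finset.mem_image.1 hd
    have hc' := Finset.mem_filter.1 hc
    rw [inner_projC]
    exact (mem_tang_iff_active hw).1 h c hc'.1 hc'.2
  · intro h
    show (y:V) ∈ Tang _ _
    rw [mem_tang_iff_active hw]
    intro c hc hcw
    have := h (Submodule.orthogonalProjectionOnto W c)
      (Finset.mem_image_of_mem _ (Finset.mem_filter.2 ⟨hc, hcw⟩))
    rwa [inner_projC] at this

lemma bridge {W : Submodule ℝ V} {w : V} (hW : Wᗮ = ℝ ∙ w) (hw0 : w ≠ 0)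
    {C : Finset V} (hw : w ∈ repSet C) {y : W} (hy : y ∈ interior (TangIn W w (repSet C))) :
    ∃ ε₀ > (0:ℝ), ∀ ε : ℝ, 0 < ε → ε ≤ ε₀ → w + ε • (y:V) ∈ strictSet C := by
  rw [tangIn_eq_repSet W hw, interior_repSet] at hy
  obtain ⟨ε₀, hε₀, hmaster⟩ := eps_master C w (y:V)
  refine ⟨ε₀, hε₀, fun ε hε hε1 c hc hc0 => ?_⟩
  rcases (hw c hc).lt_or_eq with hlt | heq
  · exact hmaster ε hε hε1 c hc hlt
  · have hproj : Submodule.orthogonalProjectionOnto W c ≠ 0 := by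
      intro h0
      have hcW : c ∈ Wᗮ := by
        have h1 : c - (Submodule.orthogonalProjectionOnto W c : V) ∈ Wᗮ :=
          Submodule.sub_starProjection_mem_orthogonal (K := W) c
        rwa [h0, Submodule.coe_zero, sub_zero] at h1
      rw [hW, Submodule.mem_span_singleton] at hcW
      obtain ⟨t, rfl⟩ := hcW
      rw [real_inner_smul_left, real_inner_self_eq_norm_sq] at heq
      have hn : (0:ℝ) < ‖w‖ ^ 2 := pow_pos (norm_pos_iff.2 hw0) 2
      have ht : t = 0 := by
        rcases mul_eq_zero.1 heq.symm with h | h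
        · exact h
        · exact absurd h hn.ne'
      exact hc0 (by rw [ht, zero_smul])
    have hyc : 0 < ⟪c, (y:V)⟫ := by
      have := hy (Submodule.orthogonalProjectionOnto W c)
        (Finset.mem_image_of_mem _ (Finset.mem_filter.2 ⟨hc, heq.symm⟩)) hproj
      rwa [inner_projC] at this
    rw [inner_add_right, real_inner_smul_right, ← heq, zero_add]
    exact mul_pos hε hyc

lemma tangIn_interior_nonempty {W : Submodule ℝ V} {w : V} (hW : Wᗮ = ℝ ∙ w)
    {C : Finset V} (hw : w ∈ repSet C) (hful : (interior (repSet C)).Nonempty) :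
    (interior (TangIn W w (repSet C))).Nonempty := by
  obtain ⟨xb, hx⟩ := hful
  rw [interior_repSet] at hx
  rw [tangIn_eq_repSet W hw, interior_repSet]
  refine ⟨Submodule.orthogonalProjectionOnto W xb, fun d hd hd0 => ?_⟩
  obtain ⟨c, hc, rfl⟩ := Finset.mem_image.1 hd
  have hcf := Finset.mem_filter.1 hc
  have hc0 : c ≠ 0 := by
    rintro rfl
    exact hd0 (by simp)
  rw [inner_projC]
  have hmem : xb - (Submodule.orthogonalProjectionOnto W xb : V) ∈ Wᗮ :=
    Submodule.sub_starProjection_mem_orthogonal xb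
  rw [hW, Submodule.mem_span_singleton] at hmem
  obtain ⟨t, ht⟩ := hmem
  have heq : (Submodule.orthogonalProjectionOnto W xb : V) = xb - t • w := by
    rw [ht]; abel
  rw [heq, inner_sub_right, real_inner_smul_right, hcf.2, mul_zero, sub_zero]
  exact hx c hcf.1 hc0

lemma tang_int_disjoint {T : Finset (Set V)} (hT : IsConeTiling T) {W : Submodule ℝ V} {w : V}
    (hW : Wᗮ = ℝ ∙ w) (hw0 : w ≠ 0) {K K' : Set V} (hK : K ∈ T) (hK' : K' ∈ T)
    (hwK : w ∈ K) (hwK' : w ∈ K') (hne : K ≠ K') :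
    interior (TangIn W w K) ∩ interior (TangIn W w K') = ∅ := by
  obtain ⟨C, hC⟩ := (hT.1 K hK).1
  obtain ⟨C', hC'⟩ := (hT.1 K' hK').1
  subst hC; subst hC'
  have hdisj := hT.2.2 _ hK _ hK' hne
  rw [eq_empty_iff_forall_notMem]
  rintro y ⟨hy, hy'⟩
  obtain ⟨ε₁, hε₁, h1⟩ := bridge hW hw0 hwK hy
  obtain ⟨ε₂, hε₂, h2⟩ := bridge hW hw0 hwK' hy'
  have hm1 := h1 (min ε₁ ε₂) (lt_min hε₁ hε₂) (min_le_left _ _)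
  have hm2 := h2 (min ε₁ ε₂) (lt_min hε₁ hε₂) (min_le_right _ _)
  have : w + (min ε₁ ε₂) • (y:V) ∈ interior (repSet C) ∩ interior (repSet C') := by
    rw [interior_repSet, interior_repSet]
    exact ⟨hm1, hm2⟩
  rw [hdisj] at this
  exact this

lemma tiling_inj {T : Finset (Set V)} (hT : IsConeTiling T) {W : Submodule ℝ V} {w : V}
    (hW : Wᗮ = ℝ ∙ w) (hw0 : w ≠ 0) {K K' : Set V} (hK : K ∈ T) (hK' : K' ∈ T)
    (hwK : w ∈ K) (hwK' : w ∈ K') (h : TangIn W w K = TangIn W w K') : K = K' := by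
  by_contra hne
  have hdisj := tang_int_disjoint hT hW hw0 hK hK' hwK hwK' hne
  rw [h, inter_self] at hdisj
  obtain ⟨C', hC'⟩ := (hT.1 K' hK').1
  subst hC'
  obtain ⟨y, hy⟩ := tangIn_interior_nonempty hW hwK' (hT.1 _ hK').2
  rw [hdisj] at hy
  exact hy

lemma tang_cover {T : Finset (Set V)} (hT : IsConeTiling T) (W : Submodule ℝ V) (w : V)
    (y : W) : ∃ K ∈ T, w ∈ K ∧ y ∈ TangIn W w K := by
  classical
  have hcov : ∀ j : ℕ, ∃ K, K ∈ T ∧ w + (1/(j+1) : ℝ) • (y:V) ∈ K := by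
    intro j
    have hmem : w + (1/(j+1):ℝ) • (y:V) ∈ ⋃ K ∈ T, K := by
      rw [hT.2.1]; trivial
    simpa using hmem
  choose f hfT hfm using hcov
  have hpig : ∃ K, K ∈ T ∧ {j | f j = K}.Infinite := by
    by_contra hcon
    push_neg at hcon
    have hsub : (Set.univ : Set ℕ) ⊆ ⋃ K ∈ T, {j | f j = K} :=
      fun j _ => mem_iUnion₂.2 ⟨f j, hfT j, rfl⟩
    have hfin : (⋃ K ∈ T, {j | f j = K}).Finite :=
      Set.Finite.biUnion T.finite_toSet
        (fun K hK => hcon K hK)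
    exact Set.infinite_univ (hfin.subset hsub)
  obtain ⟨K, hKT, hinf⟩ := hpig
  obtain ⟨C, hC⟩ := (hT.1 K hKT).1
  have hwK : w ∈ K := by
    rw [hC]
    intro c hc
    by_contra hneg
    push_neg at hneg
    obtain ⟨j, hj, hjlarge⟩ := hinf.exists_gt (Nat.ceil ((1 + |⟪c,(y:V)⟫|) / (-⟪c,w⟫)))
    have hm := hfm j
    rw [hj, hC] at hm
    have hcm := hm c hc
    rw [inner_add_right, real_inner_smul_right] at hcm
    set s : ℝ := 1/(j+1) with hs
    have hA : ((1 + |⟪c,(y:V)⟫|) / (-⟪c,w⟫) : ℝ) < (j:ℝ) + 1 := by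
      have h1 := Nat.le_ceil ((1 + |⟪c,(y:V)⟫|) / (-⟪c,w⟫))
      have h2 : ((Nat.ceil ((1 + |⟪c,(y:V)⟫|) / (-⟪c,w⟫)) : ℕ) : ℝ) < (j:ℝ) :=
        Nat.cast_lt.2 hjlarge
      linarith
    have hcw : (0:ℝ) < -⟪c,w⟫ := by linarith
    have hj1 : (0:ℝ) < (j:ℝ) + 1 := by positivity
    have hkey : 1 + |⟪c,(y:V)⟫| < (-⟪c,w⟫) * ((j:ℝ)+1) := by
      rw [div_lt_iff₀ hcw] at hA
      linarith
    have hs1 : s * |⟪c,(y:V)⟫| < -⟪c,w⟫ := by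
      rw [hs, div_mul_eq_mul_div, one_mul, div_lt_iff₀ hj1]
      nlinarith [abs_nonneg (⟪c,(y:V)⟫ : ℝ)]
    have hsy : s * ⟪c,(y:V)⟫ ≤ s * |⟪c,(y:V)⟫| := by
      have : (0:ℝ) ≤ s := by positivity
      nlinarith [le_abs_self (⟪c,(y:V)⟫ : ℝ)]
    linarith
  refine ⟨K, hKT, hwK, ?_⟩
  obtain ⟨j, hj⟩ := hinf.nonempty
  refine ⟨1/(j+1), by positivity, ?_⟩
  have := hfm j
  rwa [hj] at this

lemma tang_tiling {T : Finset (Set V)} (hT : IsConeTiling T) {W : Submodule ℝ V} {w : V}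
    (hW : Wᗮ = ℝ ∙ w) (hw0 : w ≠ 0) : IsConeTiling (TangT W w T) := by
  refine ⟨?_, ?_, ?_⟩
  · intro D hD
    obtain ⟨K, hKf, rfl⟩ := Finset.mem_image.1 hD
    obtain ⟨hKT, hwK⟩ := Finset.mem_filter.1 hKf
    obtain ⟨C, hC⟩ := (hT.1 K hKT).1
    subst hC
    exact ⟨⟨projC W w C, tangIn_eq_repSet W hwK⟩,
      tangIn_interior_nonempty hW hwK (hT.1 _ hKT).2⟩
  · apply eq_univ_of_forall
    intro y
    obtain ⟨K, hKT, hwK, hy⟩ := tang_cover hT W w y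
    exact mem_iUnion₂.2 ⟨TangIn W w K,
      Finset.mem_image_of_mem _ (Finset.mem_filter.2 ⟨hKT, hwK⟩), hy⟩
  · intro D hD D' hD' hne
    obtain ⟨K, hKf, rfl⟩ := Finset.mem_image.1 hD
    obtain ⟨K', hKf', rfl⟩ := Finset.mem_image.1 hD'
    obtain ⟨hKT, hwK⟩ := Finset.mem_filter.1 hKf
    obtain ⟨hKT', hwK'⟩ := Finset.mem_filter.1 hKf'
    have hKne : K ≠ K' := fun h => hne (by rw [h])
    exact tang_int_disjoint hT hW hw0 hKT hKT' hwK hwK' hKne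

lemma ptd_tangIn_iff {W : Submodule ℝ V} {w : V} (hW : Wᗮ = ℝ ∙ w) (hw0 : w ≠ 0)
    {C : Finset V} (hw : w ∈ repSet C) :
    Ptd (TangIn W w (repSet C)) ↔
      ∀ y, y ∈ Tang (repSet C) w → -y ∈ Tang (repSet C) w → ∃ t : ℝ, y = t • w := by
  constructor
  · intro hptd y hy hy'
    set z := Submodule.orthogonalProjectionOnto W y with hzdef
    have hmem : y - (z:V) ∈ Wᗮ := Submodule.sub_starProjection_mem_orthogonal y
    rw [hW, Submodule.mem_span_singleton] at hmem
    obtain ⟨s, hs⟩ := hmem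
    have hz : ∀ c ∈ C, ⟪c,w⟫ = 0 → ⟪c, (z:V)⟫ = 0 := by
      intro c hc hcw
      have h1 := (mem_tang_iff_active hw).1 hy c hc hcw
      have h2 := (mem_tang_iff_active hw).1 hy' c hc hcw
      rw [inner_neg_right] at h2
      have hy0 : ⟪c, y⟫ = 0 := le_antisymm (by linarith) h1
      have hzv : (z:V) = y - s • w := by rw [hs]; abel
      rw [hzv, inner_sub_right, real_inner_smul_right, hy0, hcw, mul_zero, sub_zero]
    have hz1 : z ∈ TangIn W w (repSet C) := by
      show (z:V) ∈ Tang _ _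
      rw [mem_tang_iff_active hw]
      intro c hc hcw
      rw [hz c hc hcw]
    have hz2 : -z ∈ TangIn W w (repSet C) := by
      show ((-z : W) : V) ∈ Tang _ _
      rw [Submodule.coe_neg, mem_tang_iff_active hw]
      intro c hc hcw
      rw [inner_neg_right, hz c hc hcw, neg_zero]
    have hz0 := hptd z hz1 hz2
    refine ⟨s, ?_⟩
    have hzv : (z:V) = 0 := by simp [hz0]
    rw [hzv, sub_zero] at hs
    exact hs.symm
  · intro h y hy hy'
    have hy2 : -(y:V) ∈ Tang (repSet C) w := by
      have := hy'
      show -(y:V) ∈ _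
      rw [← Submodule.coe_neg]
      exact this
    obtain ⟨t, ht⟩ := h (y:V) hy hy2
    have hyWp : (y:V) ∈ Wᗮ := by
      rw [hW, ht]
      exact Submodule.smul_mem _ t (Submodule.mem_span_singleton_self w)
    have hinner : ⟪(y:V), (y:V)⟫ = 0 :=
      (Submodule.mem_orthogonal W _).1 hyWp _ y.2
    have : (y:V) = 0 := inner_self_eq_zero.1 hinner
    exact Subtype.ext this

lemma exists_good_vertex {C : Finset V}
    (hptd : Ptd (repSet C)) (hful : (interior (repSet C)).Nonempty) (hV : Nontrivial V) :
    ∃ p : V, p ≠ 0 ∧ p ∈ repSet C ∧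
      ∀ y, y ∈ Tang (repSet C) p → -y ∈ Tang (repSet C) p → ∃ t : ℝ, y = t • p := by
  classical
  obtain ⟨xb, hxb⟩ := hful
  have hx0 : ∃ x, x ∈ repSet C ∧ x ≠ (0:V) := by
    rcases eq_or_ne xb 0 with rfl | h
    · exfalso
      have huniv := repSet_univ_of_mem_interior hxb
      obtain ⟨v, hv⟩ := exists_ne (0:V)
      exact hv (hptd v (by rw [huniv]; trivial) (by rw [huniv]; trivial))
    · exact ⟨xb, interior_subset hxb, h⟩
  obtain ⟨x₀, hx₀K, hx₀⟩ := hx0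
  set u := ∑ c ∈ C, c with hu
  have hupos : ∀ y, y ∈ repSet C → y ≠ 0 → 0 < ⟪u, y⟫ := by
    intro y hy hy0
    have hsum : ⟪u, y⟫ = ∑ c ∈ C, ⟪c, y⟫ := by rw [hu, sum_inner]
    have h0 : 0 ≤ ⟪u,y⟫ := hsum ▸ Finset.sum_nonneg hy
    rcases h0.lt_or_eq with h | h
    · exact h
    · exfalso
      have hall := (Finset.sum_eq_zero_iff_of_nonneg hy).1 (by rw [← hsum, ← h])
      have hny : -y ∈ repSet C := fun c hc => by
        rw [inner_neg_right, hall c hc, neg_zero]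
      exact hy0 (hptd y hy hny)
  set B := repSet C ∩ {y : V | ⟪u, y⟫ = 1} with hB
  have hBmem : ∀ y, y ∈ B ↔ y ∈ repSet C ∧ ⟪u, y⟫ = 1 := fun y => Iff.rfl
  have hBne : B.Nonempty := by
    have h1 : 0 < ⟪u, x₀⟫ := hupos x₀ hx₀K hx₀
    refine ⟨(⟪u,x₀⟫)⁻¹ • x₀, smul_mem_repSet (by positivity) hx₀K, ?_⟩
    simp only [mem_setOf_eq, real_inner_smul_right]
    exact inv_mul_cancel₀ h1.ne'
  have hclosed : IsClosed B := (isClosed_repSet C).inter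
    (isClosed_eq (continuous_const.inner continuous_id) continuous_const)
  have hKs : IsCompact (repSet C ∩ Metric.sphere 0 1) :=
    (isCompact_sphere (0:V) 1).inter_left (isClosed_repSet C)
  have hKsne : (repSet C ∩ Metric.sphere 0 1).Nonempty := by
    refine ⟨‖x₀‖⁻¹ • x₀, smul_mem_repSet (by positivity) hx₀K, ?_⟩
    rw [mem_sphere_zero_iff_norm, norm_smul, norm_inv, norm_norm]
    exact inv_mul_cancel₀ (norm_ne_zero_iff.2 hx₀)
  have hcont : Continuous (fun t : V => (⟪u, t⟫ : ℝ)) := continuous_const.inner continuous_id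
  obtain ⟨z, hz, hzmin⟩ := hKs.exists_isMinOn hKsne hcont.continuousOn
  have hz1 : ‖z‖ = 1 := mem_sphere_zero_iff_norm.1 hz.2
  have hm : 0 < ⟪u, z⟫ := hupos z hz.1 (by
    intro h0; rw [h0, norm_zero] at hz1; exact zero_ne_one hz1)
  have hbdd : Bornology.IsBounded B := by
    apply (Metric.isBounded_closedBall (x := (0:V)) (r := (⟪u,z⟫)⁻¹)).subset
    intro y hy
    have hy0 : y ≠ 0 := by
      rintro rfl
      have := hy.2
      simp at this
    have hyn : 0 < ‖y‖ := norm_pos_iff.2 hy0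
    have h1 : ‖y‖⁻¹ • y ∈ repSet C ∩ Metric.sphere 0 1 := by
      refine ⟨smul_mem_repSet (by positivity) hy.1, ?_⟩
      rw [mem_sphere_zero_iff_norm, norm_smul, norm_inv, norm_norm]
      exact inv_mul_cancel₀ hyn.ne'
    have h2 := hzmin h1
    simp only [mem_setOf_eq, real_inner_smul_right] at h2
    rw [hy.2, mul_one] at h2
    have h3 : ⟪u,z⟫ * ‖y‖ ≤ 1 := by
      have h4 := mul_le_mul_of_nonneg_right h2 hyn.le
      rwa [inv_mul_cancel₀ hyn.ne'] at h4
    rw [mem_closedBall, dist_zero_right, ← one_div, le_div_iff₀ hm]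
    nlinarith [h3]
  have hcomp : IsCompact B := Metric.isCompact_of_isClosed_isBounded hclosed hbdd
  obtain ⟨p, hp⟩ := hcomp.extremePoints_nonempty hBne
  obtain ⟨hpB, hpext⟩ := hp
  have hpu : ⟪u, p⟫ = 1 := hpB.2
  refine ⟨p, ?_, hpB.1, ?_⟩
  · rintro rfl
    simp at hpu
  · intro y hy hy'
    obtain ⟨ε₁, hε₁, hm1⟩ := hy
    obtain ⟨ε₂, hε₂, hm2⟩ := hy'
    set a := ⟪u, y⟫ with ha
    set ε := min (min ε₁ ε₂) (1 / (2 * (1 + |a|))) with hε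
    have hεpos : 0 < ε := lt_min (lt_min hε₁ hε₂) (by positivity)
    have hεa : ε * |a| < 1/2 := by
      have h1 : ε ≤ 1 / (2 * (1 + |a|)) := min_le_right _ _
      have h2 : ε * |a| ≤ 1 / (2 * (1 + |a|)) * |a| :=
        mul_le_mul_of_nonneg_right h1 (abs_nonneg a)
      have h3 : 1 / (2 * (1 + |a|)) * |a| < 1/2 := by
        rw [div_mul_eq_mul_div, one_mul, div_lt_iff₀ (by positivity)]
        nlinarith [abs_nonneg a]
      linarith
    have hcomb : ∀ (v : V) (εv : ℝ), 0 < εv → ε ≤ εv → p + εv • v ∈ repSet C →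
        p + ε • v ∈ repSet C := by
      intro v εv hεv hle hmem
      have heq : p + ε • v = (1 - ε/εv) • p + (ε/εv) • (p + εv • v) := by
        rw [smul_add, smul_smul, div_mul_cancel₀ _ hεv.ne']
        rw [sub_smul, one_smul]
        abel
      rw [heq]
      exact add_mem_repSet
        (smul_mem_repSet (by
          have : ε/εv ≤ 1 := (div_le_one hεv).2 hle
          linarith) hpB.1)
        (smul_mem_repSet (by positivity) hmem)
    have hplus : p + ε • y ∈ repSet C :=
      hcomb y ε₁ hε₁ (le_trans (min_le_left _ _) (min_le_left _ _)) hm1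
    have hminus : p + ε • (-y) ∈ repSet C :=
      hcomb (-y) ε₂ hε₂ (le_trans (min_le_left _ _) (min_le_right _ _)) hm2
    have h1a : (0:ℝ) < 1 + ε * a := by
      have := neg_abs_le a
      nlinarith [hεpos]
    have h2a : (0:ℝ) < 1 - ε * a := by
      have := le_abs_self a
      nlinarith [hεpos]
    set q1 := (1 + ε*a)⁻¹ • (p + ε • y) with hq1
    set q2 := (1 - ε*a)⁻¹ • (p + ε • (-y)) with hq2
    have hq1B : q1 ∈ B := by
      refine ⟨smul_mem_repSet (by positivity) hplus, ?_⟩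
      show ⟪u, q1⟫ = 1
      rw [hq1, real_inner_smul_right, inner_add_right, real_inner_smul_right, hpu, ← ha]
      exact inv_mul_cancel₀ h1a.ne'
    have hq2B : q2 ∈ B := by
      refine ⟨smul_mem_repSet (by positivity) hminus, ?_⟩
      show ⟪u, q2⟫ = 1
      rw [hq2, real_inner_smul_right, inner_add_right, real_inner_smul_right,
        inner_neg_right, hpu, ← ha]
      rw [mul_neg, ← sub_eq_add_neg]
      exact inv_mul_cancel₀ h2a.ne'
    have e1 : ((1+ε*a)/2) • q1 = (1/2 : ℝ) • (p + ε • y) := by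
      rw [hq1, smul_smul]
      congr 1
      rw [div_mul_eq_mul_div, mul_inv_cancel₀ h1a.ne']
    have e2 : ((1-ε*a)/2) • q2 = (1/2 : ℝ) • (p + ε • (-y)) := by
      rw [hq2, smul_smul]
      congr 1
      rw [div_mul_eq_mul_div, mul_inv_cancel₀ h2a.ne']
    have hseg : p ∈ openSegment ℝ q1 q2 :=
      ⟨(1+ε*a)/2, (1-ε*a)/2, by linarith, by linarith, by ring, by
        rw [e1, e2]; module⟩
    have hq1p := hpext hq1B hq2B hseg
    have heq : p + ε • y = (1 + ε*a) • p := by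
      have hc := congrArg (fun v => (1+ε*a) • v) hq1p
      simp only [hq1, smul_smul, mul_inv_cancel₀ h1a.ne', one_smul] at hc
      exact hc
    refine ⟨a, ?_⟩
    have hey : ε • y = (ε * a) • p := by
      have h' := heq
      rw [add_smul, one_smul] at h'
      exact add_left_cancel h'
    have hfin := congrArg (fun v => ε⁻¹ • v) hey
    simp only [smul_smul, inv_mul_cancel₀ hεpos.ne', one_smul] at hfin
    rw [hfin, ← mul_assoc, inv_mul_cancel₀ hεpos.ne', one_mul]


lemma span_neg_singleton (p : V) : (ℝ ∙ (-p)) = ℝ ∙ p := by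
  apply le_antisymm
  · rw [Submodule.span_singleton_le_iff_mem]
    exact Submodule.neg_mem (ℝ ∙ p) (Submodule.mem_span_singleton_self p)
  · rw [Submodule.span_singleton_le_iff_mem]
    have h := Submodule.neg_mem (ℝ ∙ (-p)) (Submodule.mem_span_singleton_self (-p))
    rwa [neg_neg] at h

omit [FiniteDimensional ℝ V] in
lemma cnt_ne_zero {L : List (Finset (Set V) × ℤ)} {K : Set V} (h : cnt L K ≠ 0) :
    ∃ Tε ∈ L, K ∈ Tε.1 ∧ Ptd K := by
  by_contra hcon
  push_neg at hcon
  apply h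
  apply List.sum_eq_zero
  intro x hx
  obtain ⟨Tε, hTε, rfl⟩ := List.mem_map.1 hx
  rw [if_neg]
  rintro ⟨h1, h2⟩
  exact hcon Tε hTε h1 h2

omit [FiniteDimensional ℝ V] in
lemma subset_foldr_union (L : List (Finset (Set V) × ℤ)) :
    ∀ Tε ∈ L, Tε.1 ⊆ L.foldr (fun Tε acc => Tε.1 ∪ acc) ∅ := by
  induction L with
  | nil => simp
  | cons x L ih =>
    intro Tε hTε
    rcases List.mem_cons.1 hTε with rfl | h
    · exact (Finset.subset_union_left : Tε.1 ⊆ Tε.1 ∪ _)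
    · exact (ih Tε h).trans Finset.subset_union_right

omit [FiniteDimensional ℝ V] in
lemma cnt_swap (L : List (Finset (Set V) × ℤ)) (U : Finset (Set V)) (φ : Set V → ℤ)
    (hU : ∀ Tε ∈ L, Tε.1 ⊆ U) :
    (L.map fun Tε => ∑ K ∈ Tε.1, (if Ptd K then Tε.2 else 0) * φ K).sum
      = ∑ K ∈ U, cnt L K * φ K := by
  induction L with
  | nil => simp [cnt]
  | cons Tε L ih =>
    have hsub : Tε.1 ⊆ U := hU Tε List.mem_cons_self
    rw [List.map_cons, List.sum_cons, ih (fun x hx => hU x (List.mem_cons_of_mem _ hx))]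
    have hext : ∑ K ∈ Tε.1, (if Ptd K then Tε.2 else 0) * φ K
        = ∑ K ∈ U, (if K ∈ Tε.1 ∧ Ptd K then Tε.2 else 0) * φ K := by
      rw [← Finset.sum_subset hsub]
      · apply Finset.sum_congr rfl
        intro K hK
        congr 1
        by_cases h : Ptd K
        · rw [if_pos h, if_pos ⟨hK, h⟩]
        · rw [if_neg h, if_neg (fun hh => h hh.2)]
      · intro K _ hnK
        rw [if_neg (fun hh => hnK hh.1), zero_mul]
    rw [hext, ← Finset.sum_add_distrib]
    apply Finset.sum_congr rfl
    intro K _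
    show _ = cnt (Tε :: L) K * φ K
    unfold cnt
    rw [List.map_cons, List.sum_cons]
    show _ = (_ + (List.map _ L).sum) * φ K
    have : cnt L K = (List.map (fun Tε => if K ∈ Tε.1 ∧ Ptd K then Tε.2 else 0) L).sum := rfl
    rw [← this]
    ring

omit [FiniteDimensional ℝ V] in
lemma cnt_pair {V' : Type} [NormedAddCommGroup V'] [InnerProductSpace ℝ V']
    (L : List (Finset (Set V) × ℤ)) (F G : Finset (Set V) → Finset (Set V')) (D : Set V') :
    cnt (L.flatMap fun Tε => [(F Tε.1, Tε.2), (G Tε.1, -Tε.2)]) D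
      = (L.map fun Tε => Tε.2 * ((if D ∈ F Tε.1 ∧ Ptd D then (1:ℤ) else 0)
          - (if D ∈ G Tε.1 ∧ Ptd D then (1:ℤ) else 0))).sum := by
  induction L with
  | nil => simp [cnt]
  | cons Tε L ih =>
    rw [List.flatMap_cons]
    unfold cnt
    rw [List.map_append, List.sum_append, List.map_cons, List.sum_cons]
    unfold cnt at ih
    rw [ih]
    rw [List.map_cons, List.sum_cons, List.map_cons, List.sum_cons, List.map_nil, List.sum_nil]
    split_ifs <;> ring

lemma base_case (hrank : finrank ℝ V = 1)
    (L : List (Finset (Set V) × ℤ)) (hL : ∀ Tε ∈ L, IsConeTiling Tε.1)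
    (C₀ : Set V) (hcnt : ∀ K : Set V, cnt L K = if K = C₀ then 1 else 0) : False := by
  classical
  obtain ⟨e, he0, hspan⟩ := finrank_eq_one_iff'.1 hrank
  have he2 : (0:ℝ) < ⟪e,e⟫ := by
    rw [real_inner_self_eq_norm_sq]
    exact pow_pos (norm_pos_iff.2 he0) 2
  set N := {y : V | 0 ≤ ⟪e, y⟫} with hN
  set M := {y : V | ⟪e, y⟫ ≤ 0} with hM
  have hclass : ∀ K : Set V, IsPC K → (interior K).Nonempty → K = univ ∨ K = N ∨ K = M := by
    rintro K ⟨C, rfl⟩ hint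
    by_cases ha : ∃ c ∈ C, 0 < ⟪c, e⟫
    · by_cases hb : ∃ c ∈ C, ⟪c, e⟫ < 0
      · exfalso
        obtain ⟨c1, hc1, hc1p⟩ := ha
        obtain ⟨c2, hc2, hc2n⟩ := hb
        have hsub : repSet C ⊆ {(0:V)} := by
          intro y hy
          obtain ⟨t, ht⟩ := hspan y
          have h1 := hy c1 hc1
          have h2 := hy c2 hc2
          rw [← ht, real_inner_smul_right] at h1 h2
          have ht0 : t = 0 := by nlinarith
          rw [← ht, ht0, zero_smul]
          rfl
        obtain ⟨x, hx⟩ := hint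
        have hx0 : x = 0 := hsub (interior_subset hx)
        subst hx0
        have huniv := repSet_univ_of_mem_interior hx
        rw [huniv] at hsub
        exact he0 (hsub (mem_univ e))
      · right; left
        push_neg at hb
        ext y
        obtain ⟨t, ht⟩ := hspan y
        constructor
        · intro hy
          obtain ⟨c1, hc1, hc1p⟩ := ha
          have h1 := hy c1 hc1
          rw [← ht, real_inner_smul_right] at h1
          have htn : 0 ≤ t := by nlinarith
          show 0 ≤ ⟪e, y⟫
          rw [← ht, real_inner_smul_right]
          exact mul_nonneg htn he2.le
        · intro hy c hc
          have hce : 0 ≤ ⟪c, e⟫ := hb c hc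
          have hy' : (0:ℝ) ≤ ⟪e, y⟫ := hy
          rw [← ht, real_inner_smul_right] at hy' ⊢
          have htn : 0 ≤ t := by nlinarith
          exact mul_nonneg htn hce
    · by_cases hb : ∃ c ∈ C, ⟪c, e⟫ < 0
      · right; right
        push_neg at ha
        ext y
        obtain ⟨t, ht⟩ := hspan y
        constructor
        · intro hy
          obtain ⟨c1, hc1, hc1n⟩ := hb
          have h1 := hy c1 hc1
          rw [← ht, real_inner_smul_right] at h1
          have htn : t ≤ 0 := by nlinarith
          show ⟪e, y⟫ ≤ 0
          rw [← ht, real_inner_smul_right]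
          exact mul_nonpos_of_nonpos_of_nonneg htn he2.le
        · intro hy c hc
          have hce : ⟪c, e⟫ ≤ 0 := ha c hc
          have hy' : ⟪e, y⟫ ≤ (0:ℝ) := hy
          rw [← ht, real_inner_smul_right] at hy' ⊢
          have htn : t ≤ 0 := by nlinarith
          nlinarith
      · left
        push_neg at ha hb
        apply eq_univ_of_forall
        intro y c hc
        have h1 := ha c hc
        have h2 := hb c hc
        have hce : ⟪c, e⟫ = 0 := le_antisymm h1 h2
        obtain ⟨t, ht⟩ := hspan c
        rw [← ht, real_inner_smul_left] at hce
        have ht0 : t = 0 := by nlinarith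
        rw [← ht, ht0, zero_smul, inner_zero_left]
  have hNptd : Ptd N := by
    intro y hy hy'
    have hy2 : (0:ℝ) ≤ ⟪e, y⟫ := hy
    have hy2' : (0:ℝ) ≤ ⟪e, -y⟫ := hy'
    rw [inner_neg_right] at hy2'
    obtain ⟨t, ht⟩ := hspan y
    rw [← ht, real_inner_smul_right] at hy2 hy2'
    have ht0 : t = 0 := by nlinarith
    rw [← ht, ht0, zero_smul]
  have hMptd : Ptd M := by
    intro y hy hy'
    have hy2 : ⟪e, y⟫ ≤ (0:ℝ) := hy
    have hy2' : ⟪e, -y⟫ ≤ (0:ℝ) := hy'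
    rw [inner_neg_right] at hy2'
    obtain ⟨t, ht⟩ := hspan y
    rw [← ht, real_inner_smul_right] at hy2 hy2'
    have ht0 : t = 0 := by nlinarith
    rw [← ht, ht0, zero_smul]
  have hUnotptd : ¬ Ptd (univ : Set V) := fun h => he0 (h e (mem_univ e) (mem_univ (-e)))
  have heN : e ∈ N := he2.le
  have hmeM : (-e) ∈ M := by
    show ⟪e, -e⟫ ≤ 0
    rw [inner_neg_right]
    linarith
  have hNM : N ≠ M := by
    intro h
    have h2 : e ∈ M := h ▸ heN
    have h3 : ⟪e,e⟫ ≤ (0:ℝ) := h2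
    linarith
  have hNU : N ≠ univ := by
    intro h
    have h2 : (-e) ∈ N := h ▸ mem_univ (-e)
    have h3 : (0:ℝ) ≤ ⟪e, -e⟫ := h2
    rw [inner_neg_right] at h3
    linarith
  have hMU : M ≠ univ := by
    intro h
    have h2 : e ∈ M := h ▸ mem_univ e
    have h3 : ⟪e, e⟫ ≤ (0:ℝ) := h2
    linarith
  have htil : ∀ T : Finset (Set V), IsConeTiling T → T = {univ} ∨ T = ({N, M} : Finset (Set V)) := by
    intro T hT
    by_cases hu : (univ : Set V) ∈ T
    · left
      apply Finset.eq_singleton_iff_unique_mem.2 ⟨hu, ?_⟩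
      intro K hK
      by_contra hne
      have hdisj := hT.2.2 K hK univ hu hne
      have hint := (hT.1 K hK).2
      rw [interior_univ, inter_univ] at hdisj
      obtain ⟨x, hx⟩ := hint
      rw [hdisj] at hx
      exact hx
    · right
      have hmem : ∀ K ∈ T, K = N ∨ K = M := by
        intro K hK
        rcases hclass K (hT.1 K hK).1 (hT.1 K hK).2 with h | h | h
        · exact absurd (h ▸ hK) hu
        · exact Or.inl h
        · exact Or.inr h
      have hNT : N ∈ T := by
        have he' : e ∈ ⋃ K ∈ T, K := by rw [hT.2.1]; trivial
        obtain ⟨K, hK, hKe⟩ := mem_iUnion₂.1 he'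
        rcases hmem K hK with rfl | rfl
        · exact hK
        · exfalso
          have h3 : ⟪e,e⟫ ≤ (0:ℝ) := hKe
          linarith
      have hMT : M ∈ T := by
        have he' : (-e) ∈ ⋃ K ∈ T, K := by rw [hT.2.1]; trivial
        obtain ⟨K, hK, hKe⟩ := mem_iUnion₂.1 he'
        rcases hmem K hK with rfl | rfl
        · exfalso
          have h3 : (0:ℝ) ≤ ⟪e,-e⟫ := hKe
          rw [inner_neg_right] at h3
          linarith
        · exact hK
      apply Finset.Subset.antisymm
      · intro K hK
        rcases hmem K hK with rfl | rfl
        · exact Finset.mem_insert_self _ _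
        · exact Finset.mem_insert_of_mem (Finset.mem_singleton_self _)
      · intro K hK
        rcases Finset.mem_insert.1 hK with rfl | hK
        · exact hNT
        · rw [Finset.mem_singleton.1 hK]
          exact hMT
  have heqc : cnt L N = cnt L M := by
    unfold cnt
    apply congrArg
    apply List.map_congr_left
    intro Tε hTε
    rcases htil Tε.1 (hL Tε hTε) with h | h
    · rw [h]
      rw [if_neg, if_neg]
      · rintro ⟨h1, -⟩
        exact hMU (Finset.mem_singleton.1 h1)
      · rintro ⟨h1, -⟩
        exact hNU (Finset.mem_singleton.1 h1)
    · rw [h]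
      rw [if_pos ⟨Finset.mem_insert_self _ _, hNptd⟩,
        if_pos ⟨Finset.mem_insert_of_mem (Finset.mem_singleton_self _), hMptd⟩]
  have h1 : cnt L C₀ = 1 := by rw [hcnt C₀, if_pos rfl]
  obtain ⟨Tε, hTε, hC₀T, hC₀ptd⟩ := cnt_ne_zero (by rw [h1]; exact one_ne_zero)
  rcases htil Tε.1 (hL Tε hTε) with h | h
  · rw [h] at hC₀T
    rw [← Finset.mem_singleton.1 hC₀T] at hUnotptd
    exact hUnotptd hC₀ptd
  · rw [h] at hC₀T
    rcases Finset.mem_insert.1 hC₀T with rfl | hC₀T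
    · have h2 : cnt L M = 0 := by rw [hcnt M, if_neg hNM.symm]
      rw [heqc, h2] at h1
      exact zero_ne_one h1
    · have hC0M : C₀ = M := Finset.mem_singleton.1 hC₀T
      have h2 : cnt L N = 0 := by
        rw [hcnt N, if_neg (hC0M ▸ hNM)]
      rw [heqc] at h2
      rw [hC0M, h2] at h1
      exact zero_ne_one h1

theorem grand : ∀ (d : ℕ) (V : Type) [NormedAddCommGroup V] [InnerProductSpace ℝ V]
    [FiniteDimensional ℝ V], finrank ℝ V = d + 1 →
    ∀ L : List (Finset (Set V) × ℤ), (∀ Tε ∈ L, IsConeTiling Tε.1) →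
    ∀ C₀ : Set V, (∀ K : Set V, cnt L K = if K = C₀ then 1 else 0) → False := by
  intro d
  induction d with
  | zero =>
    intro V _ _ _ hrank L hL C₀ hcnt
    exact base_case hrank L hL C₀ hcnt
  | succ d ih =>
    intro V _ _ _ hrank L hL C₀ hcnt
    classical
    have h1 : cnt L C₀ = 1 := by rw [hcnt C₀, if_pos rfl]
    obtain ⟨Tε₀, hTε₀, hC₀T, hC₀ptd⟩ := cnt_ne_zero (by rw [h1]; exact one_ne_zero)
    obtain ⟨⟨C, hC⟩, hful⟩ := (hL Tε₀ hTε₀).1 C₀ hC₀T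
    have hnt : Nontrivial V := by
      apply (finrank_pos_iff (R := ℝ)).1
      rw [hrank]
      omega
    have hptdC : Ptd (repSet C) := hC ▸ hC₀ptd
    have hfulC : (interior (repSet C)).Nonempty := hC ▸ hful
    obtain ⟨p, hp0, hpK, hpgood⟩ := exists_good_vertex hptdC hfulC hnt
    set W := (ℝ ∙ p)ᗮ with hWdef
    have hWp : Wᗮ = ℝ ∙ p := Submodule.orthogonal_orthogonal _
    have hWnp : Wᗮ = ℝ ∙ (-p) := by rw [hWp, span_neg_singleton]
    have hnp0 : (-p) ≠ 0 := neg_ne_zero.2 hp0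
    have hrankW : finrank ℝ W = d + 1 := by
      have h := Submodule.finrank_add_finrank_orthogonal (K := (ℝ ∙ p))
      have hsp : finrank ℝ (ℝ ∙ p) = 1 := finrank_span_singleton hp0
      rw [hsp, hrank] at h
      rw [hWdef]
      omega
    set L' : List (Finset (Set ↥W) × ℤ) := L.flatMap (fun Tε =>
      [(TangT W p Tε.1, Tε.2), (TangT W (-p) Tε.1, -Tε.2)]) with hL'
    have hL'til : ∀ Tε ∈ L', IsConeTiling Tε.1 := by
      intro Tε hTε
      rw [hL'] at hTε
      obtain ⟨Sε, hSε, hmem⟩ := List.mem_flatMap.1 hTε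
      have htil := hL Sε hSε
      rcases List.mem_cons.1 hmem with rfl | hmem2
      · exact tang_tiling htil hWp hp0
      · rcases List.mem_cons.1 hmem2 with rfl | hmem3
        · exact tang_tiling htil hWnp hnp0
        · exact absurd hmem3 List.not_mem_nil
    set D₀ : Set ↥W := TangIn W p C₀ with hD₀
    have key : ∀ D : Set ↥W, cnt L' D = if D = D₀ then 1 else 0 := by
      intro D
      have hdelta : ∀ (w : V), Wᗮ = (ℝ ∙ w) → w ≠ 0 → ∀ T : Finset (Set V), IsConeTiling T →
          (if D ∈ TangT W w T ∧ Ptd D then (1:ℤ) else 0)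
            = ∑ K ∈ T, (if w ∈ K ∧ TangIn W w K = D ∧ Ptd D then (1:ℤ) else 0) := by
        intro w hWw hw0 T hT
        by_cases hex : ∃ K ∈ T, w ∈ K ∧ TangIn W w K = D ∧ Ptd D
        · obtain ⟨K, hKT, hKcond⟩ := hex
          have hKfil : K ∈ T.filter (fun K => w ∈ K) :=
            Finset.mem_filter.2 ⟨hKT, hKcond.1⟩
          have hDmem : D ∈ TangT W w T := by
            have h2 := Finset.mem_image_of_mem (TangIn W w) hKfil
            rw [hKcond.2.1] at h2
            exact h2
          rw [if_pos ⟨hDmem, hKcond.2.2⟩]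
          rw [Finset.sum_eq_single_of_mem K hKT]
          · rw [if_pos hKcond]
          · intro K' hK' hne
            rw [if_neg]
            rintro ⟨hw1, hw2, -⟩
            exact hne (tiling_inj hT hWw hw0 hK' hKT hw1 hKcond.1
              (hw2.trans hKcond.2.1.symm))
        · rw [if_neg, Finset.sum_eq_zero]
          · intro K hK
            rw [if_neg]
            intro hcond
            exact hex ⟨K, hK, hcond⟩
          · rintro ⟨hD, hptd⟩
            obtain ⟨K, hKf, hKD⟩ := Finset.mem_image.1 hD
            obtain ⟨hKT, hwK⟩ := Finset.mem_filter.1 hKf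
            exact hex ⟨K, hKT, hwK, hKD, hptd⟩
      have hkill : ∀ K : Set V, IsPC K → ¬ Ptd K →
          (if p ∈ K ∧ TangIn W p K = D ∧ Ptd D then (1:ℤ) else 0)
            = (if (-p) ∈ K ∧ TangIn W (-p) K = D ∧ Ptd D then (1:ℤ) else 0) := by
        rintro K ⟨C', rfl⟩ hnptd
        rw [Ptd] at hnptd
        push_neg at hnptd
        obtain ⟨y₀, hy₀K, hy₀nK, hy₀0⟩ := hnptd
        have haux : ∀ w : V, Wᗮ = (ℝ ∙ w) → w ≠ 0 →
            (w ∈ repSet C' ∧ TangIn W w (repSet C') = D ∧ Ptd D) →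
            ((-w) ∈ repSet C' ∧ TangIn W (-w) (repSet C') = D ∧ Ptd D) := by
          rintro w hWw hw0 ⟨hw1, hw2, hw3⟩
          have hptdT : Ptd (TangIn W w (repSet C')) := by rw [hw2]; exact hw3
          have hsc := (ptd_tangIn_iff hWw hw0 hw1).1 hptdT
          obtain ⟨t, ht⟩ := hsc y₀ (tang_supset hw1 hy₀K) (tang_supset hw1 hy₀nK)
          have ht0 : t ≠ 0 := fun h => hy₀0 (by rw [ht, h, zero_smul])
          have hnw : (-w) ∈ repSet C' := by
            rcases lt_or_gt_of_ne ht0 with hlt | hgt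
            · have he : (-t⁻¹) • y₀ = -w := by
                rw [ht, smul_smul, neg_mul, inv_mul_cancel₀ ht0, neg_smul, one_smul]
              rw [← he]
              refine smul_mem_repSet ?_ hy₀K
              have h4 : t⁻¹ < 0 := inv_neg''.2 hlt
              linarith
            · have he : t⁻¹ • (-y₀) = -w := by
                rw [ht, smul_neg, smul_smul, inv_mul_cancel₀ ht0, one_smul]
              rw [← he]
              exact smul_mem_repSet (inv_pos.2 hgt).le hy₀nK
          have hT1 : Tang (repSet C') w = repSet C' := tang_poled hw1 hnw
          have hT2 : Tang (repSet C') (-w) = repSet C' := tang_poled hnw (by rwa [neg_neg])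
          refine ⟨hnw, ?_, hw3⟩
          rw [← hw2]
          show TangIn W (-w) _ = TangIn W w _
          unfold TangIn
          rw [hT1, hT2]
        have hiff : (p ∈ repSet C' ∧ TangIn W p (repSet C') = D ∧ Ptd D)
            ↔ ((-p) ∈ repSet C' ∧ TangIn W (-p) (repSet C') = D ∧ Ptd D) := by
          constructor
          · exact haux p hWp hp0
          · intro h
            have h2 := haux (-p) hWnp hnp0 h
            rwa [neg_neg] at h2
        rw [if_congr hiff rfl rfl]
      have hstep1 : cnt L' D = (L.map fun Tε => Tε.2 *
          ((if D ∈ TangT W p Tε.1 ∧ Ptd D then (1:ℤ) else 0)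
            - (if D ∈ TangT W (-p) Tε.1 ∧ Ptd D then (1:ℤ) else 0))).sum := by
        rw [hL']
        exact cnt_pair L (TangT W p) (TangT W (-p)) D
      have hstep2 : cnt L' D = (L.map fun Tε =>
          ∑ K ∈ Tε.1, (if Ptd K then Tε.2 else 0) *
            ((if p ∈ K ∧ TangIn W p K = D ∧ Ptd D then (1:ℤ) else 0)
              - (if (-p) ∈ K ∧ TangIn W (-p) K = D ∧ Ptd D then (1:ℤ) else 0))).sum := by
        rw [hstep1]
        apply congrArg
        apply List.map_congr_left
        intro Tε hTε
        have htil := hL Tε hTε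
        rw [hdelta p hWp hp0 Tε.1 htil, hdelta (-p) hWnp hnp0 Tε.1 htil]
        rw [← Finset.sum_sub_distrib, Finset.mul_sum]
        apply Finset.sum_congr rfl
        intro K hK
        by_cases hptdK : Ptd K
        · rw [if_pos hptdK]
        · rw [if_neg hptdK, zero_mul]
          rw [hkill K (htil.1 K hK).1 hptdK, sub_self, mul_zero]
      have hUsub := subset_foldr_union L
      have hstep3 : cnt L' D = ∑ K ∈ L.foldr (fun Tε acc => Tε.1 ∪ acc) ∅,
          cnt L K * ((if p ∈ K ∧ TangIn W p K = D ∧ Ptd D then (1:ℤ) else 0)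
            - (if (-p) ∈ K ∧ TangIn W (-p) K = D ∧ Ptd D then (1:ℤ) else 0)) := by
        rw [hstep2]
        exact cnt_swap L _ _ hUsub
      have hC₀U : C₀ ∈ L.foldr (fun Tε acc => Tε.1 ∪ acc) ∅ := hUsub Tε₀ hTε₀ hC₀T
      have hstep4 : cnt L' D =
          (if p ∈ C₀ ∧ TangIn W p C₀ = D ∧ Ptd D then (1:ℤ) else 0)
            - (if (-p) ∈ C₀ ∧ TangIn W (-p) C₀ = D ∧ Ptd D then (1:ℤ) else 0) := by
        rw [hstep3]
        rw [Finset.sum_eq_single_of_mem C₀ hC₀U]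
        · rw [hcnt C₀, if_pos rfl, one_mul]
        · intro K hK hne
          rw [hcnt K, if_neg hne, zero_mul]
      have hgN0 : (if (-p) ∈ C₀ ∧ TangIn W (-p) C₀ = D ∧ Ptd D then (1:ℤ) else 0) = 0 := by
        rw [if_neg]
        rintro ⟨hn1, -, -⟩
        exact hp0 (hC₀ptd p (hC ▸ hpK) hn1)
      have hgPval : (if p ∈ C₀ ∧ TangIn W p C₀ = D ∧ Ptd D then (1:ℤ) else 0)
          = if D = D₀ then 1 else 0 := by
        by_cases hD : D = D₀
        · rw [if_pos hD, if_pos]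
          refine ⟨hC ▸ hpK, ?_, ?_⟩
          · rw [hD, hD₀]
          · have hptdD₀ : Ptd D₀ := by
              have h2 := (ptd_tangIn_iff hWp hp0 hpK).2 hpgood
              rw [hD₀, hC]
              exact h2
            rw [hD]
            exact hptdD₀
        · rw [if_neg hD, if_neg]
          rintro ⟨-, h2, -⟩
          exact hD (h2 ▸ (by rw [hD₀] : D₀ = TangIn W p C₀)).symm
      rw [hstep4, hgN0, hgPval, sub_zero]
    exact ih W hrankW L' hL'til D₀ key

end SphTile

open SphTile

section FinalReduction

/-- Cone over a subset of the sphere. -/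
def coneOf {n : ℕ} (Q : Set (Euc n)) : Set (Euc n) := {y | y = 0 ∨ ‖y‖⁻¹ • y ∈ Q}

lemma normalize_mem_sphere {n : ℕ} {y : Euc n} (hy : y ≠ 0) : ‖y‖⁻¹ • y ∈ unitSphere n := by
  rw [unitSphere, mem_sphere_zero_iff_norm, norm_smul, norm_inv, norm_norm,
    inv_mul_cancel₀ (norm_ne_zero_iff.2 hy)]

lemma coneOf_eq_repSet {n : ℕ} {Q : Set (Euc n)} {C : Finset (Euc n)}
    (hQ : Q = unitSphere n ∩ ⋂ c ∈ C, {y : Euc n | 0 ≤ ⟪c, y⟫}) :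
    coneOf Q = repSet C := by
  ext y
  rcases eq_or_ne y 0 with rfl | hy0
  · constructor
    · intro _
      exact zero_mem_repSet C
    · intro _
      exact Or.inl rfl
  · have hn0 : ‖y‖ ≠ 0 := norm_ne_zero_iff.2 hy0
    have hnpos : (0:ℝ) < ‖y‖ := norm_pos_iff.2 hy0
    constructor
    · rintro (rfl | h)
      · exact absurd rfl hy0
      · rw [hQ] at h
        intro c hc
        have h3 : (0:ℝ) ≤ ⟪c, ‖y‖⁻¹ • y⟫ := Set.mem_iInter₂.1 h.2 c hc
        rw [real_inner_smul_right] at h3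
        nlinarith [inv_pos.2 hnpos]
    · intro h
      right
      rw [hQ]
      refine ⟨normalize_mem_sphere hy0, ?_⟩
      apply Set.mem_iInter₂.2
      intro c hc
      show (0:ℝ) ≤ ⟪c, ‖y‖⁻¹ • y⟫
      rw [real_inner_smul_right]
      exact mul_nonneg (by positivity) (h c hc)

lemma coneOf_inter_sphere {n : ℕ} {Q : Set (Euc n)} (hQs : Q ⊆ unitSphere n) :
    coneOf Q ∩ unitSphere n = Q := by
  ext y
  constructor
  · rintro ⟨(rfl | h), hS⟩
    · exfalso
      have h1 : ‖(0 : Euc n)‖ = 1 := mem_sphere_zero_iff_norm.1 hS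
      rw [norm_zero] at h1
      exact zero_ne_one h1
    · have h1 : ‖y‖ = 1 := mem_sphere_zero_iff_norm.1 hS
      rwa [h1, inv_one, one_smul] at h
  · intro hy
    have hS := hQs hy
    have h1 : ‖y‖ = 1 := mem_sphere_zero_iff_norm.1 hS
    exact ⟨Or.inr (by rwa [h1, inv_one, one_smul]), hS⟩

lemma sph_to_interior {n : ℕ} {Q : Set (Euc n)} (hQs : Q ⊆ unitSphere n)
    (hne : (sphInterior Q).Nonempty) : (interior (coneOf Q)).Nonempty := by
  obtain ⟨z, hzQ, ε, hε, hball⟩ := hne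
  have hz1 : ‖z‖ = 1 := mem_sphere_zero_iff_norm.1 (hQs hzQ)
  set δ := min (ε/2) (1/2) with hδdef
  have hδ : 0 < δ := lt_min (by linarith) (by norm_num)
  refine ⟨z, mem_interior.2 ⟨Metric.ball z δ, ?_, Metric.isOpen_ball, Metric.mem_ball_self hδ⟩⟩
  intro y hy
  rw [Metric.mem_ball, dist_eq_norm] at hy
  have habs : |‖y‖ - ‖z‖| ≤ ‖y - z‖ := abs_norm_sub_norm_le y z
  rw [hz1] at habs
  have hyn : (1:ℝ)/2 < ‖y‖ := by
    have h1 : δ ≤ 1/2 := min_le_right _ _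
    have h2 := abs_le.1 habs
    linarith
  have hy0 : y ≠ 0 := by
    intro h
    rw [h, norm_zero] at hyn
    linarith
  right
  apply hball _ (normalize_mem_sphere hy0)
  have e1 : ‖y‖⁻¹ • y - y = (‖y‖⁻¹ - 1) • y := by rw [sub_smul, one_smul]
  have e2 : ‖‖y‖⁻¹ • y - y‖ = |1 - ‖y‖| := by
    rw [e1, norm_smul, Real.norm_eq_abs, ← abs_of_nonneg (norm_nonneg y), ← abs_mul]
    congr 1
    have hn0 : ‖y‖ ≠ 0 := norm_ne_zero_iff.2 hy0
    rw [abs_of_nonneg (norm_nonneg y), sub_mul, inv_mul_cancel₀ hn0, one_mul]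
  have e4 : |1 - ‖y‖| ≤ ‖y - z‖ := by rwa [abs_sub_comm] at habs
  have e5 : dist (‖y‖⁻¹ • y) z ≤ dist (‖y‖⁻¹ • y) y + dist y z := dist_triangle _ _ _
  rw [dist_eq_norm, dist_eq_norm] at e5
  have h1 : δ ≤ ε/2 := min_le_left _ _
  calc dist (‖y‖⁻¹ • y) z ≤ ‖‖y‖⁻¹ • y - y‖ + ‖y - z‖ := e5
    _ = |1 - ‖y‖| + ‖y - z‖ := by rw [e2]
    _ ≤ ‖y - z‖ + ‖y - z‖ := by linarith
    _ < ε := by linarith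

lemma interior_to_sph {n : ℕ} {Q : Set (Euc n)} (hQs : Q ⊆ unitSphere n)
    {x : Euc n} (hx : x ∈ interior (coneOf Q)) (hx0 : x ≠ 0) :
    ‖x‖⁻¹ • x ∈ sphInterior Q := by
  obtain ⟨δ, hδ, hball⟩ := Metric.isOpen_iff.1 isOpen_interior x hx
  have hxn : (0:ℝ) < ‖x‖ := norm_pos_iff.2 hx0
  have hxQ : ‖x‖⁻¹ • x ∈ Q := by
    rcases interior_subset hx with h0 | h
    · exact absurd h0 hx0
    · exact h
  refine ⟨hxQ, δ/‖x‖, by positivity, ?_⟩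
  intro y hyS hdist
  have hy1 : ‖y‖ = 1 := mem_sphere_zero_iff_norm.1 hyS
  have hy0 : y ≠ 0 := by
    intro h
    rw [h, norm_zero] at hy1
    exact zero_ne_one hy1
  have hmem : ‖x‖ • y ∈ coneOf Q := by
    apply interior_subset
    apply hball
    rw [Metric.mem_ball, dist_eq_norm]
    have e1 : ‖x‖ • y - x = ‖x‖ • (y - ‖x‖⁻¹ • x) := by
      rw [smul_sub, smul_smul, mul_inv_cancel₀ hxn.ne', one_smul]
    rw [e1, norm_smul, Real.norm_eq_abs, abs_of_pos hxn]
    have h2 : ‖y - ‖x‖⁻¹ • x‖ < δ/‖x‖ := by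
      rw [← dist_eq_norm]
      exact hdist
    calc ‖x‖ * ‖y - ‖x‖⁻¹ • x‖ < ‖x‖ * (δ/‖x‖) := by
          exact mul_lt_mul_of_pos_left h2 hxn
      _ = δ := by field_simp
  rcases hmem with h0 | h
  · exfalso
    apply hy0
    have := smul_eq_zero.1 h0
    rcases this with h1 | h1
    · exact absurd h1 hxn.ne'
    · exact h1
  · have e2 : ‖‖x‖ • y‖⁻¹ • ‖x‖ • y = y := by
      rw [norm_smul, Real.norm_eq_abs, abs_of_pos hxn, hy1, mul_one, smul_smul,
        inv_mul_cancel₀ hxn.ne', one_smul]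
    rwa [e2] at h

lemma ptd_coneOf_iff {n : ℕ} {Q : Set (Euc n)} (hQs : Q ⊆ unitSphere n) :
    Ptd (coneOf Q) ↔ ¬ IsBType Q := by
  constructor
  · intro hptd hB
    obtain ⟨x, hxQ, hxQ'⟩ := hB
    have hx1 : ‖x‖ = 1 := mem_sphere_zero_iff_norm.1 (hQs hxQ)
    have hx0 : x ≠ 0 := by
      intro h
      rw [h, norm_zero] at hx1
      exact zero_ne_one hx1
    apply hx0
    apply hptd x
    · exact Or.inr (by rw [hx1, inv_one, one_smul]; exact hxQ)
    · exact Or.inr (by rw [norm_neg, hx1, inv_one, one_smul]; exact hxQ')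
  · intro hB y hy hy'
    by_contra hy0
    apply hB
    rcases hy with rfl | h
    · exact absurd rfl hy0
    rcases hy' with h0 | h'
    · exact absurd (neg_eq_zero.1 h0) hy0
    refine ⟨‖y‖⁻¹ • y, h, ?_⟩
    rw [norm_neg, smul_neg] at h'
    exact h'

end FinalReduction

/-- No tiling of the sphere by convex spherical polytopes contains exactly one
A-type polytope. -/
theorem no_tiling_with_exactly_one_atype (n : ℕ) (𝒯 : Finset (Set (Euc n)))
    (h𝒯 : IsSphTiling 𝒯) :
    ¬ ∃ P ∈ 𝒯, ¬ IsBType P ∧ ∀ Q ∈ 𝒯, ¬ IsBType Q → Q = P := by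
  rintro ⟨P, hP𝒯, hPA, huniq⟩
  classical
  have hsub : ∀ Q ∈ 𝒯, Q ⊆ unitSphere n := by
    intro Q hQ𝒯
    obtain ⟨⟨C, hC⟩, -⟩ := h𝒯.1 Q hQ𝒯
    rw [hC]
    exact inter_subset_left
  rcases Nat.eq_zero_or_pos n with rfl | hn
  · obtain ⟨-, hint⟩ := h𝒯.1 P hP𝒯
    obtain ⟨z, hz, -⟩ := hint
    have hzS : z ∈ unitSphere 0 := hsub P hP𝒯 hz
    have h1 : ‖z‖ = 1 := mem_sphere_zero_iff_norm.1 hzS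
    have hz0 : z = 0 := Subsingleton.elim z 0
    rw [hz0, norm_zero] at h1
    exact zero_ne_one h1
  · refine grand (n-1) (Euc n) ?_ [(𝒯.image coneOf, 1)] ?_ (coneOf P) ?_
    · rw [finrank_euclideanSpace_fin]
      omega
    · intro Tε hTε
      rw [List.mem_singleton] at hTε
      subst hTε
      refine ⟨?_, ?_, ?_⟩
      · intro K hK
        obtain ⟨Q, hQ𝒯, rfl⟩ := Finset.mem_image.1 hK
        obtain ⟨⟨C, hC⟩, hint⟩ := h𝒯.1 Q hQ𝒯
        exact ⟨⟨C, coneOf_eq_repSet hC⟩, sph_to_interior (hsub Q hQ𝒯) hint⟩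
      · apply eq_univ_of_forall
        intro y
        rcases eq_or_ne y 0 with rfl | hy0
        · exact mem_iUnion₂.2 ⟨coneOf P, Finset.mem_image_of_mem _ hP𝒯, Or.inl rfl⟩
        · have hS : ‖y‖⁻¹ • y ∈ unitSphere n := normalize_mem_sphere hy0
          rw [← h𝒯.2.1] at hS
          obtain ⟨Q, hQ𝒯, hQy⟩ := mem_iUnion₂.1 hS
          exact mem_iUnion₂.2 ⟨coneOf Q, Finset.mem_image_of_mem _ hQ𝒯, Or.inr hQy⟩
      · intro K hK K' hK' hne
        obtain ⟨Q, hQ𝒯, rfl⟩ := Finset.mem_image.1 hK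
        obtain ⟨Q', hQ'𝒯, rfl⟩ := Finset.mem_image.1 hK'
        have hQne : Q ≠ Q' := fun h => hne (by rw [h])
        rw [eq_empty_iff_forall_notMem]
        rintro x ⟨hx, hx'⟩
        rcases eq_or_ne x 0 with rfl | hx0
        · obtain ⟨⟨C, hC⟩, -⟩ := h𝒯.1 Q hQ𝒯
          obtain ⟨⟨C', hC'⟩, -⟩ := h𝒯.1 Q' hQ'𝒯
          have h1 : coneOf Q = univ := by
            rw [coneOf_eq_repSet hC] at hx ⊢
            exact repSet_univ_of_mem_interior hx
          have h2 : coneOf Q' = univ := by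
            rw [coneOf_eq_repSet hC'] at hx' ⊢
            exact repSet_univ_of_mem_interior hx'
          apply hQne
          rw [← coneOf_inter_sphere (hsub Q hQ𝒯), ← coneOf_inter_sphere (hsub Q' hQ'𝒯), h1, h2]
        · have h1 := interior_to_sph (hsub Q hQ𝒯) hx hx0
          have h2 := interior_to_sph (hsub Q' hQ'𝒯) hx' hx0
          have h3 := h𝒯.2.2 Q hQ𝒯 Q' hQ'𝒯 hQne
          rw [eq_empty_iff_forall_notMem] at h3
          exact h3 _ ⟨h1, h2⟩
    · intro K
      simp only [cnt, List.map_cons, List.map_nil, List.sum_cons, List.sum_nil, add_zero]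
      by_cases hK : K = coneOf P
      · rw [if_pos, if_pos hK]
        subst hK
        exact ⟨Finset.mem_image_of_mem _ hP𝒯, (ptd_coneOf_iff (hsub P hP𝒯)).2 hPA⟩
      · rw [if_neg hK, if_neg]
        rintro ⟨hmem, hptd⟩
        obtain ⟨Q, hQ𝒯, rfl⟩ := Finset.mem_image.1 hmem
        have hnB := (ptd_coneOf_iff (hsub Q hQ𝒯)).1 hptd
        exact hK (by rw [huniq Q hQ𝒯 hnB])
end
end

section
/- Let 𝒯 be a locally finite tiling of ℝⁿ by convex polytopes and let x be a point of ℝⁿ. Then there exists r > 0 such that every face of every tile of 𝒯 that intersects the sphere of radius r centered at x contains x. -/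
open Set Metric

noncomputable section

/-- A convex polytope: the convex hull of a finite point set (equivalently, a bounded
intersection of finitely many closed halfspaces). -/
def IsPolytope {n : ℕ} (P : Set (Euc n)) : Prop :=
  ∃ V : Finset (Euc n), P = convexHull ℝ (V : Set (Euc n))

/-- A tiling of `ℝⁿ` by full-dimensional convex polytopes: the tiles cover `ℝⁿ` and
have pairwise disjoint interiors. -/
def IsTiling {n : ℕ} (𝒯 : Set (Set (Euc n))) : Prop :=
  (∀ T ∈ 𝒯, IsPolytope T ∧ (interior T).Nonempty) ∧
  ⋃₀ 𝒯 = Set.univ ∧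
  ∀ T ∈ 𝒯, ∀ T' ∈ 𝒯, T ≠ T' → interior T ∩ interior T' = ∅

/-- A collection of tiles is locally finite if every bounded set meets only finitely
many tiles. -/
def IsLocallyFinite {n : ℕ} (𝒯 : Set (Set (Euc n))) : Prop :=
  ∀ U : Set (Euc n), Bornology.IsBounded U → {T | T ∈ 𝒯 ∧ (T ∩ U).Nonempty}.Finite

lemma extreme_absorbs {n : ℕ} {T F : Set (Euc n)} (hTF : IsExtreme ℝ T F)
    (S : Finset (Euc n)) (hST : convexHull ℝ (S : Set (Euc n)) ⊆ T)
    {w : Euc n → ℝ} (hw : ∀ v ∈ S, 0 < w v) (hw1 : ∑ v ∈ S, w v = 1)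
    (hp : S.centerMass w id ∈ F) : convexHull ℝ (S : Set (Euc n)) ⊆ F := by
  have hSne : S.Nonempty := by
    by_contra h
    rw [Finset.not_nonempty_iff_eq_empty] at h
    simp [h] at hw1
  set m : ℝ := S.inf' hSne w with hm
  have hm0 : 0 < m := (Finset.lt_inf'_iff hSne).mpr hw
  have hc0 : (0:ℝ) < 1 + m := by linarith
  intro u hu
  rw [Finset.convexHull_eq] at hu
  obtain ⟨s, hs0, hs1, hsu⟩ := hu
  set w' : Euc n → ℝ := fun v => (1 + m) * w v - m * s v with hw'
  have hsle : ∀ v ∈ S, s v ≤ 1 := by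
    intro v hv
    calc s v ≤ ∑ y ∈ S, s y := Finset.single_le_sum hs0 hv
    _ = 1 := hs1
  have hw'0 : ∀ v ∈ S, 0 ≤ w' v := by
    intro v hv
    have h1 : m ≤ w v := Finset.inf'_le _ hv
    have h2 : s v ≤ 1 := hsle v hv
    have := hw v hv
    simp only [hw']
    nlinarith
  have hw'1 : ∑ v ∈ S, w' v = 1 := by
    simp only [hw', Finset.sum_sub_distrib, ← Finset.mul_sum, hw1, hs1]
    ring
  set u' := S.centerMass w' id with hu'
  have hu'S : u' ∈ convexHull ℝ (S : Set (Euc n)) :=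
    S.centerMass_mem_convexHull hw'0 (by rw [hw'1]; norm_num) (fun i hi => hi)
  have hvec : m • u + u' = (1 + m) • S.centerMass w id := by
    rw [← hsu, hu', Finset.centerMass_eq_of_sum_1 _ _ hs1,
      Finset.centerMass_eq_of_sum_1 _ _ hw'1, Finset.centerMass_eq_of_sum_1 _ _ hw1,
      Finset.smul_sum, Finset.smul_sum, ← Finset.sum_add_distrib]
    refine Finset.sum_congr rfl fun v hv => ?_
    simp only [id, hw', smul_smul, ← add_smul]
    congr 1
    ring
  have key : S.centerMass w id ∈ openSegment ℝ u u' := by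
    refine ⟨m / (1 + m), 1 / (1 + m), div_pos hm0 hc0, by positivity, by field_simp; ring, ?_⟩
    have := congrArg (fun z : Euc n => (1 + m)⁻¹ • z) hvec
    simp only [smul_add, smul_smul, inv_mul_cancel₀ (ne_of_gt hc0), one_smul] at this
    rw [← this]
    congr 1 <;> rw [div_eq_mul_inv] <;> ring_nf
  exact (hTF.2 (hST (Finset.mem_convexHull.mpr ⟨s, hs0, hs1, hsu⟩)) (hST hu'S) hp key)

/-- Around any point `x` of a locally finite polytopal tiling of `ℝⁿ` there is a sphere
such that every face (extreme subset) of every tile meeting the sphere contains `x`. -/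
theorem small_sphere_exists {n : ℕ} (𝒯 : Set (Set (Euc n)))
    (h𝒯 : IsTiling 𝒯) (hlf : IsLocallyFinite 𝒯) (x : Euc n) :
    ∃ r > 0, ∀ T ∈ 𝒯, ∀ F : Set (Euc n), IsExtreme ℝ T F →
      (F ∩ Metric.sphere x r).Nonempty → x ∈ F := by
  classical
  -- a choice of vertex set for each tile
  set Vf : Set (Euc n) → Finset (Euc n) := fun T =>
    if h : IsPolytope T then h.choose else ∅ with hVf
  have hVfspec : ∀ T ∈ 𝒯, T = convexHull ℝ ((Vf T : Set (Euc n))) := by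
    intro T hT
    have h : IsPolytope T := (h𝒯.1 T hT).1
    simp only [hVf, dif_pos h]
    exact h.choose_spec
  -- the finitely many tiles near x
  set ℱ : Set (Set (Euc n)) := {T | T ∈ 𝒯 ∧ (T ∩ closedBall x 1).Nonempty} with hℱ
  have hℱfin : ℱ.Finite := hlf _ isBounded_closedBall
  -- the bad set
  set C : Set (Euc n) :=
    ⋃ T ∈ ℱ, ⋃ S ∈ {S : Finset (Euc n) | S ⊆ Vf T ∧ x ∉ convexHull ℝ (S : Set (Euc n))},
      convexHull ℝ (S : Set (Euc n)) with hC
  have hCclosed : IsClosed C := by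
    refine hℱfin.isClosed_biUnion fun T _ => ?_
    refine Set.Finite.isClosed_biUnion ?_ fun S _ => (S.finite_toSet.isCompact_convexHull ℝ).isClosed
    exact Set.Finite.subset (Vf T).powerset.finite_toSet (fun S hS => by
      simpa using hS.1)
  have hxC : x ∉ C := by
    simp only [hC, Set.mem_iUnion]
    rintro ⟨T, hT, S, hS, hx⟩
    exact hS.2 hx
  obtain ⟨ε, hε, hball⟩ := Metric.mem_nhds_iff.mp (hCclosed.isOpen_compl.mem_nhds hxC)
  refine ⟨min (ε / 2) (1 / 2), by positivity, ?_⟩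
  set r := min (ε / 2) (1 / 2) with hr
  have hr1 : r ≤ 1 := le_trans (min_le_right _ _) (by norm_num)
  have hrε : r < ε := lt_of_le_of_lt (min_le_left _ _) (by linarith)
  intro T hT F hTF ⟨p, hpF, hps⟩
  have hpT : p ∈ T := hTF.1 hpF
  have hpd : dist p x = r := mem_sphere.mp hps
  have hTℱ : T ∈ ℱ := ⟨hT, ⟨p, hpT, mem_closedBall.mpr (by rw [hpd]; exact hr1)⟩⟩
  -- express p as a positive combination
  have hpV : p ∈ convexHull ℝ ((Vf T : Set (Euc n))) := (hVfspec T hT) ▸ hpT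
  rw [Finset.convexHull_eq] at hpV
  obtain ⟨w, hw0, hw1, hwp⟩ := hpV
  set S : Finset (Euc n) := (Vf T).filter (fun v => w v ≠ 0) with hS
  have hSsub : S ⊆ Vf T := Finset.filter_subset _ _
  have hwS : ∀ v ∈ S, 0 < w v := fun v hv => by
    have := Finset.mem_filter.mp hv
    exact lt_of_le_of_ne (hw0 v this.1) (Ne.symm this.2)
  have hwS1 : ∑ v ∈ S, w v = 1 := by rw [hS, Finset.sum_filter_ne_zero, hw1]
  have hwSp : S.centerMass w id = p := by rw [hS, Finset.centerMass_filter_ne_zero, hwp]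
  have hpS : p ∈ convexHull ℝ (S : Set (Euc n)) := by
    rw [← hwSp]
    exact S.centerMass_mem_convexHull (fun v hv => (hwS v hv).le) (by rw [hwS1]; norm_num)
      (fun i hi => hi)
  have hSconvT : convexHull ℝ (S : Set (Euc n)) ⊆ T := by
    rw [hVfspec T hT]
    exact convexHull_mono (by exact_mod_cast hSsub)
  -- x must lie in conv S
  have hxS : x ∈ convexHull ℝ (S : Set (Euc n)) := by
    by_contra hx
    have hpC : p ∈ C := by
      simp only [hC, Set.mem_iUnion]
      exact ⟨T, hTℱ, S, ⟨hSsub, hx⟩, hpS⟩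
    have hpb : p ∈ ball x ε := mem_ball.mpr (by rw [hpd]; exact hrε)
    exact hball hpb hpC
  exact extreme_absorbs hTF S hSconvT hwS hwS1 (hwSp ▸ hpF) hxS
end
end

section
/- In a locally finite tiling of the plane ℝ² by convex polygons, every point that is a vertex of one polygon of the tiling is also a vertex of at least one other polygon of the tiling. -/
open Set Metric

noncomputable section

open MeasureTheory

lemma half_meas (f : Euc 2 →L[ℝ] ℝ) (hf : f ≠ 0) (x : Euc 2) (r : ℝ) :
    2 * volume (ball x r ∩ {y | f (y - x) ≤ 0}) = volume (ball x r) := by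
  set A : Set (Euc 2) := ball x r ∩ {y | f (y - x) ≤ 0} with hA
  set B : Set (Euc 2) := ball x r ∩ {y | 0 ≤ f (y - x)} with hB
  have hmeasA : MeasurableSet A := by
    apply isOpen_ball.measurableSet.inter
    exact (isClosed_le (by fun_prop) continuous_const).measurableSet
  have hmeasB : MeasurableSet B := by
    apply isOpen_ball.measurableSet.inter
    exact (isClosed_le continuous_const (by fun_prop)).measurableSet
  have hAB : A = (fun y => (x + x) + (-y)) ⁻¹' B := by
    ext y
    simp only [hA, hB, mem_inter_iff, mem_preimage, mem_ball, mem_setOf_eq]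
    constructor
    · rintro ⟨h1, h2⟩
      constructor
      · rwa [show dist (x + x + -y) x = dist y x by
          rw [dist_eq_norm, dist_eq_norm, show x + x + -y - x = -(y - x) from by abel, norm_neg]]
      · have : f (x + x + -y - x) = - f (y - x) := by
          rw [← map_neg]; congr 1; abel
        rw [this]; linarith
    · rintro ⟨h1, h2⟩
      constructor
      · rwa [show dist (x + x + -y) x = dist y x by
          rw [dist_eq_norm, dist_eq_norm, show x + x + -y - x = -(y - x) from by abel, norm_neg]] at h1
      · have : f (x + x + -y - x) = - f (y - x) := by
          rw [← map_neg]; congr 1; abel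
        rw [this] at h2; linarith
  have hABeq : volume A = volume B := by
    rw [hAB]
    have : (fun y : Euc 2 => (x + x) + (-y)) = (fun y => (x + x) + y) ∘ (fun y => -y) := rfl
    rw [this, Set.preimage_comp, Measure.measure_preimage_neg, measure_preimage_add]
  have hunion : A ∪ B = ball x r := by
    ext y; simp only [hA, hB, mem_union, mem_inter_iff, mem_setOf_eq]
    constructor
    · rintro (⟨h, _⟩ | ⟨h, _⟩) <;> exact h
    · intro h; rcases le_total (f (y - x)) 0 with h' | h'
      · exact Or.inl ⟨h, h'⟩
      · exact Or.inr ⟨h, h'⟩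
  have hinter : volume (A ∩ B) = 0 := by
    have hsub : A ∩ B ⊆ (fun y => y - x) ⁻¹' (LinearMap.ker (f : Euc 2 →ₗ[ℝ] ℝ) : Set (Euc 2)) := by
      rintro y ⟨⟨_, h1⟩, ⟨_, h2⟩⟩
      simp only [mem_preimage, SetLike.mem_coe, LinearMap.mem_ker]
      exact le_antisymm h1 h2
    refine measure_mono_null hsub ?_
    have : volume ((LinearMap.ker (f : Euc 2 →ₗ[ℝ] ℝ) : Submodule ℝ (Euc 2)) : Set (Euc 2)) = 0 := by
      apply Measure.addHaar_submodule
      intro h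
      exact hf (by ext y; have := h ▸ Submodule.mem_top (R := ℝ) (x := y); simpa using this)
    simpa [sub_eq_add_neg] using
      (measure_preimage_add_right volume (-x) ((LinearMap.ker (f : Euc 2 →ₗ[ℝ] ℝ) : Submodule ℝ (Euc 2)) : Set (Euc 2))) ▸ this
  have := measure_union_add_inter₀ (μ := volume) (t := B) A hmeasB.nullMeasurableSet
  rw [hunion, hinter, add_zero] at this
  rw [← hABeq] at this
  rw [two_mul]
  exact this.symm

-- the fact that any point of the plane lies in a translated kernel seen before; helper:
lemma hyperplane_null (f : Euc 2 →L[ℝ] ℝ) (hf : f ≠ 0) (x : Euc 2) :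
    volume {y : Euc 2 | f (y - x) = 0} = 0 := by
  have hker : volume ((LinearMap.ker (f : Euc 2 →ₗ[ℝ] ℝ) : Submodule ℝ (Euc 2)) : Set (Euc 2)) = 0 := by
    apply Measure.addHaar_submodule
    intro h
    exact hf (by ext y; have := h ▸ Submodule.mem_top (R := ℝ) (x := y); simpa using this)
  have : {y : Euc 2 | f (y - x) = 0}
      = (fun y => y + (-x)) ⁻¹' ((LinearMap.ker (f : Euc 2 →ₗ[ℝ] ℝ) : Submodule ℝ (Euc 2)) : Set (Euc 2)) := by
    ext y; simp [sub_eq_add_neg, LinearMap.mem_ker]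
  rw [this, measure_preimage_add_right]
  exact hker

-- kernel vector
lemma exists_ker_vec (f : Euc 2 →L[ℝ] ℝ) : ∃ w : Euc 2, w ≠ 0 ∧ f w = 0 := by
  have hni : ¬ Function.Injective f := by
    intro hinj
    have h2 : Module.finrank ℝ (Euc 2) ≤ Module.finrank ℝ ℝ :=
      LinearMap.finrank_le_finrank_of_injective (f := f.toLinearMap) hinj
    simp [Module.finrank_self] at h2
  rw [Function.not_injective_iff] at hni
  obtain ⟨a, b, hab, hne⟩ := hni
  exact ⟨a - b, sub_ne_zero.2 hne, by rw [map_sub, hab, sub_self]⟩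

lemma exists_wedge_pt (f : Euc 2 →L[ℝ] ℝ) (hf : f ≠ 0) (δ r : ℝ) (hδ : 0 < δ) (hr : 0 < r)
    (x : Euc 2) : ∃ y, dist y x < r ∧ f (y - x) < 0 ∧ 0 < f (y - x) + δ * ‖y - x‖ := by
  obtain ⟨w, hw0, hfw⟩ := exists_ker_vec f
  obtain ⟨z₀, hz₀⟩ : ∃ z₀, f z₀ ≠ 0 := by
    by_contra h; push_neg at h; exact hf (by ext y; simpa using h y)
  set z : Euc 2 := (f z₀)⁻¹ • z₀ with hz
  have hfz : f z = 1 := by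
    rw [hz, f.map_smul, smul_eq_mul, inv_mul_cancel₀ hz₀]
  have hwpos : 0 < ‖w‖ := norm_pos_iff.2 hw0
  have hznn : (0:ℝ) ≤ ‖z‖ := norm_nonneg _
  set a : ℝ := r / (2 * ‖w‖) with ha
  set b : ℝ := min 1 δ * r / (8 * (1 + ‖z‖)) with hb
  have hmpos : 0 < min 1 δ := lt_min one_pos hδ
  have hm1 : min 1 δ ≤ 1 := min_le_left _ _
  have hmδ : min 1 δ ≤ δ := min_le_right _ _
  have hbpos : 0 < b := by positivity
  have hapos : 0 < a := by positivity
  have haw : a * ‖w‖ = r / 2 := by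
    rw [ha]; field_simp
  have hbz : b * ‖z‖ ≤ r / 8 := by
    rw [hb, div_mul_eq_mul_div, div_le_iff₀ (by positivity)]
    have key : min 1 δ * r * ‖z‖ ≤ r * ‖z‖ :=
      mul_le_mul_of_nonneg_right (mul_le_of_le_one_left hr.le hm1) hznn
    nlinarith [mul_nonneg hr.le hznn]
  have hbδ : b ≤ δ * r / 8 := by
    rw [hb]
    rw [div_le_div_iff₀ (by positivity) (by norm_num)]
    have h1 : min 1 δ * r ≤ δ * r := mul_le_mul_of_nonneg_right hmδ hr.le
    nlinarith [mul_nonneg (mul_nonneg hδ.le hr.le) hznn]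
  have hnsmul : ‖a • w‖ = r / 2 := by
    rw [norm_smul, Real.norm_of_nonneg hapos.le, haw]
  have hbsmul : ‖b • z‖ ≤ r / 8 := by
    rw [norm_smul, Real.norm_of_nonneg hbpos.le]; exact hbz
  have hup : ‖a • w - b • z‖ ≤ r / 2 + r / 8 := by
    calc ‖a • w - b • z‖ ≤ ‖a • w‖ + ‖b • z‖ := norm_sub_le _ _
      _ ≤ r / 2 + r / 8 := by rw [hnsmul]; linarith
  have hlow : r / 2 - r / 8 ≤ ‖a • w - b • z‖ := by
    have := norm_sub_norm_le (a • w) (b • z)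
    linarith [hnsmul ▸ this]
  have hfd : f (x + (a • w - b • z) - x) = -b := by
    rw [add_sub_cancel_left, map_sub, f.map_smul, f.map_smul, hfw, hfz]
    simp
  refine ⟨x + (a • w - b • z), ?_, ?_, ?_⟩
  · rw [dist_eq_norm, add_sub_cancel_left]; linarith
  · rw [hfd]; linarith
  · rw [hfd, add_sub_cancel_left]
    have : δ * (r / 2 - r / 8) ≤ δ * ‖a • w - b • z‖ := by
      exact mul_le_mul_of_nonneg_left hlow hδ.le
    nlinarith

lemma vertex_meas (V : Finset (Euc 2)) (x : Euc 2)
    (hx : x ∈ extremePoints ℝ (convexHull ℝ (V : Set (Euc 2))))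
    (hint : (interior (convexHull ℝ (V : Set (Euc 2)))).Nonempty)
    (r : ℝ) (hr : 0 < r) :
    2 * volume (convexHull ℝ (V : Set (Euc 2)) ∩ ball x r) < volume (ball x r) := by
  classical
  set T : Set (Euc 2) := convexHull ℝ (V : Set (Euc 2)) with hTdef
  have hxV : x ∈ V := by exact_mod_cast extremePoints_convexHull_subset hx
  set V' : Finset (Euc 2) := V.erase x with hV'
  have hVne : V'.Nonempty := by
    rcases V'.eq_empty_or_nonempty with h | h
    · exfalso
      have hVx : (V : Set (Euc 2)) = {x} := by
        apply Subset.antisymm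
        · intro v hv
          by_contra hne
          have : v ∈ V' := Finset.mem_erase.2 ⟨by simpa using hne, hv⟩
          simp [h] at this
        · simp [hxV]
      rw [hVx] at hTdef
      obtain ⟨p, hp⟩ := hint
      rw [hTdef, convexHull_singleton] at hp
      simp at hp
    · exact h
  have hxnot : x ∉ convexHull ℝ (V' : Set (Euc 2)) := by
    intro hmem
    have hsub : convexHull ℝ (V' : Set (Euc 2)) ⊆ T :=
      convexHull_mono (by intro v hv; exact Finset.mem_of_mem_erase (by exact_mod_cast hv))
    have hx' : x ∈ extremePoints ℝ (convexHull ℝ (V' : Set (Euc 2))) :=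
      ⟨hmem, fun x₁ h₁ x₂ h₂ hseg => hx.2 (hsub h₁) (hsub h₂) hseg⟩
    have := extremePoints_convexHull_subset hx'
    exact Finset.notMem_erase x V (by exact_mod_cast this)
  obtain ⟨f, u, hfu, hux⟩ := geometric_hahn_banach_closed_point
    (convex_convexHull ℝ _) ((V'.finite_toSet.isCompact_convexHull ℝ).isClosed) hxnot
  obtain ⟨v₀, hv₀⟩ := id hVne
  have hv₀x : v₀ ≠ x := Finset.ne_of_mem_erase hv₀
  have hf : f ≠ 0 := by
    intro h0
    have h1 := hfu v₀ (subset_convexHull ℝ _ (by exact_mod_cast hv₀))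
    rw [h0] at h1 hux
    simp at h1 hux
    linarith
  set R : ℝ := V'.sup' hVne (fun v => ‖v - x‖) with hR
  have hRpos : 0 < R := by
    have := Finset.le_sup' (fun v => ‖v - x‖) hv₀
    have h2 : 0 < ‖v₀ - x‖ := norm_pos_iff.2 (sub_ne_zero.2 hv₀x)
    linarith
  set ε : ℝ := f x - u with hε
  have hεpos : 0 < ε := by rw [hε]; linarith
  set δ : ℝ := ε / R with hδdef
  have hδpos : 0 < δ := by positivity
  set W : Set (Euc 2) := {y | f (y - x) + δ * ‖y - x‖ ≤ 0} with hW
  have hWconv : Convex ℝ W := by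
    intro y₁ h₁ y₂ h₂ a b ha hb hab
    simp only [hW, mem_setOf_eq] at h₁ h₂ ⊢
    have hcomb : a • y₁ + b • y₂ - x = a • (y₁ - x) + b • (y₂ - x) := by
      match_scalars <;> linarith
    rw [hcomb]
    have hfc : f (a • (y₁ - x) + b • (y₂ - x)) = a * f (y₁ - x) + b * f (y₂ - x) := by
      rw [map_add, f.map_smul, f.map_smul]; simp
    have hnc : ‖a • (y₁ - x) + b • (y₂ - x)‖ ≤ a * ‖y₁ - x‖ + b * ‖y₂ - x‖ := by
      calc ‖a • (y₁ - x) + b • (y₂ - x)‖ ≤ ‖a • (y₁ - x)‖ + ‖b • (y₂ - x)‖ := norm_add_le _ _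
        _ = a * ‖y₁ - x‖ + b * ‖y₂ - x‖ := by
            rw [norm_smul, norm_smul, Real.norm_of_nonneg ha, Real.norm_of_nonneg hb]
    rw [hfc]
    nlinarith [mul_le_mul_of_nonneg_left h₁ ha, mul_le_mul_of_nonneg_left h₂ hb]
  have hVW : (V : Set (Euc 2)) ⊆ W := by
    intro v hv
    simp only [hW, mem_setOf_eq]
    by_cases hvx : v = x
    · subst hvx; simp
    · have hv' : v ∈ V' := Finset.mem_erase.2 ⟨hvx, by exact_mod_cast hv⟩
      have h1 : f v < u := hfu v (subset_convexHull ℝ _ (by exact_mod_cast hv'))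
      have h2 : f (v - x) < -ε := by rw [map_sub]; rw [hε]; linarith
      have h3 : ‖v - x‖ ≤ R := Finset.le_sup' (fun v => ‖v - x‖) hv'
      have h4 : δ * ‖v - x‖ ≤ ε := by
        rw [hδdef]
        rw [div_mul_eq_mul_div, div_le_iff₀ hRpos]
        nlinarith
      linarith
  have hTW : T ⊆ W := convexHull_min hVW hWconv
  set A : Set (Euc 2) := ball x r ∩ {y | f (y - x) ≤ 0} with hA
  set O : Set (Euc 2) :=
    ball x r ∩ ({y | f (y - x) < 0} ∩ {y | 0 < f (y - x) + δ * ‖y - x‖}) with hO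
  have hOopen : IsOpen O := by
    apply isOpen_ball.inter
    have h1 : IsOpen {y : Euc 2 | f (y - x) < 0} :=
      isOpen_lt (by fun_prop) continuous_const
    have h2 : IsOpen {y : Euc 2 | 0 < f (y - x) + δ * ‖y - x‖} :=
      isOpen_lt continuous_const (by fun_prop)
    exact h1.inter h2
  have hOne : O.Nonempty := by
    obtain ⟨y, h1, h2, h3⟩ := exists_wedge_pt f hf δ r hδpos hr x
    exact ⟨y, mem_ball.mpr h1, h2, h3⟩
  have hOsubA : O ⊆ A := by
    rintro y ⟨h1, h2, _⟩
    refine ⟨h1, ?_⟩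
    show f (y - x) ≤ 0
    exact le_of_lt h2
  have hTsubA : T ∩ ball x r ⊆ A := by
    rintro y ⟨h1, h2⟩
    refine ⟨h2, ?_⟩
    have := hTW h1
    simp only [hW, mem_setOf_eq] at this
    have : f (y - x) ≤ -(δ * ‖y - x‖) := by linarith
    have hn : 0 ≤ δ * ‖y - x‖ := by positivity
    simp only [mem_setOf_eq]; linarith
  have hdisj : Disjoint (T ∩ ball x r) O := by
    rw [Set.disjoint_left]
    rintro y ⟨h1, _⟩ ⟨_, _, h3⟩
    have h4 := hTW h1
    simp only [hW, mem_setOf_eq] at h4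
    have h3' : 0 < f (y - x) + δ * ‖y - x‖ := h3
    linarith
  have hsum : volume (T ∩ ball x r) + volume O ≤ volume A := by
    rw [← measure_union hdisj hOopen.measurableSet]
    exact measure_mono (union_subset hTsubA hOsubA)
  have hhalf := half_meas f hf x r
  have hOpos : 0 < volume O := hOopen.measure_pos volume hOne
  have hfin : 2 * volume (T ∩ ball x r) ≠ ⊤ := by
    have h1 : volume (T ∩ ball x r) ≤ volume (ball x r) := measure_mono inter_subset_right
    have := measure_ball_lt_top (x := x) (r := r) (μ := volume)
    intro h
    rw [ENNReal.mul_eq_top] at h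
    rcases h with ⟨_, h⟩ | ⟨h, _⟩
    · exact absurd (lt_of_le_of_lt (h ▸ h1) this) (by simp)
    · norm_num at h
  calc 2 * volume (T ∩ ball x r)
      < 2 * volume (T ∩ ball x r) + 2 * volume O :=
        ENNReal.lt_add_right hfin (by simpa using hOpos.ne')
    _ = 2 * (volume (T ∩ ball x r) + volume O) := by ring
    _ ≤ 2 * volume A := by gcongr
    _ = volume (ball x r) := hhalf

lemma ker_eq_span (g : Euc 2 →L[ℝ] ℝ) (u0 : Euc 2) (hu0 : u0 ≠ 0) (hgu : g u0 = 0)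
    (hg : ∃ v, g v ≠ 0) : ∀ d : Euc 2, g d = 0 → ∃ c : ℝ, d = c • u0 := by
  obtain ⟨v, hv⟩ := hg
  have hrange : LinearMap.range (g : Euc 2 →ₗ[ℝ] ℝ) = ⊤ := by
    rw [LinearMap.range_eq_top]
    intro t
    exact ⟨(t / g v) • v, by simp [smul_eq_mul]; field_simp⟩
  have hker : Module.finrank ℝ (LinearMap.ker (g : Euc 2 →ₗ[ℝ] ℝ)) = 1 := by
    have h1 := LinearMap.finrank_range_add_finrank_ker (g : Euc 2 →ₗ[ℝ] ℝ)
    rw [hrange] at h1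
    have h2 : Module.finrank ℝ (Euc 2) = 2 := by
      simp [finrank_euclideanSpace]
    have h3 : Module.finrank ℝ (⊤ : Submodule ℝ ℝ) = 1 := by
      simp
    omega
  have hspan : Module.finrank ℝ (Submodule.span ℝ ({u0} : Set (Euc 2))) = 1 :=
    finrank_span_singleton hu0
  have hle : Submodule.span ℝ ({u0} : Set (Euc 2)) ≤ LinearMap.ker (g : Euc 2 →ₗ[ℝ] ℝ) := by
    rw [Submodule.span_le]
    intro z hz
    simp only [mem_singleton_iff] at hz
    subst hz
    simpa [LinearMap.mem_ker] using hgu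
  have heq : Submodule.span ℝ ({u0} : Set (Euc 2)) = LinearMap.ker (g : Euc 2 →ₗ[ℝ] ℝ) :=
    Submodule.eq_of_le_of_finrank_eq hle (by rw [hspan, hker])
  intro d hd
  have : d ∈ Submodule.span ℝ ({u0} : Set (Euc 2)) := by
    rw [heq]; simpa [LinearMap.mem_ker] using hd
  obtain ⟨c, hc⟩ := Submodule.mem_span_singleton.1 this
  exact ⟨c, hc.symm⟩

set_option maxHeartbeats 1000000 in
lemma nonvertex_halfplane (S : Set (Euc 2)) (hS : Convex ℝ S) (hint : (interior S).Nonempty)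
    (x : Euc 2) (hxS : x ∈ S) (hx : x ∉ extremePoints ℝ S) :
    ∃ (g : Euc 2 →L[ℝ] ℝ) (r0 : ℝ), g ≠ 0 ∧ 0 < r0 ∧
      ∀ y, dist y x < r0 → 0 ≤ g (y - x) → y ∈ S := by
  rw [mem_extremePoints] at hx
  push_neg at hx
  obtain ⟨a, ha, b, hb, hseg, hne⟩ := hx hxS
  obtain ⟨ta, tb, hta, htb, htab, hsum⟩ := hseg
  have hab : a ≠ b := by
    intro h
    subst h
    have : x = a := by
      rw [← hsum, ← add_smul, htab, one_smul]
    exact (hne this.symm) this.symm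
  set u0 : Euc 2 := b - a with hu0def
  have hu0 : u0 ≠ 0 := sub_ne_zero.2 (Ne.symm hab)
  have hxa : x = a + tb • u0 := by
    rw [← hsum, hu0def, smul_sub]
    have : ta = 1 - tb := by linarith
    rw [this]
    module
  -- orthogonal functional to u0
  obtain ⟨w, hw0, hfw⟩ := exists_ker_vec (innerSL ℝ u0)
  set g₀ : Euc 2 →L[ℝ] ℝ := innerSL ℝ w with hg₀
  have hg₀u : g₀ u0 = 0 := by
    simp only [hg₀, innerSL_apply_apply]
    rw [real_inner_comm]
    simpa using hfw
  have hg₀ne : g₀ ≠ 0 := by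
    intro h
    have : g₀ w = 0 := by rw [h]; rfl
    simp only [hg₀, innerSL_apply_apply, real_inner_self_eq_norm_sq] at this
    exact hw0 (by simpa [norm_eq_zero] using by nlinarith [norm_pos_iff.2 hw0, this])
  -- find p in interior S with g₀ (p - x) ≠ 0
  obtain ⟨p, hpint, hgp0⟩ : ∃ p ∈ interior S, g₀ (p - x) ≠ 0 := by
    by_contra h
    push_neg at h
    have hsub : interior S ⊆ {y : Euc 2 | g₀ (y - x) = 0} := fun y hy => h y hy
    have h0 := measure_mono_null hsub (hyperplane_null g₀ hg₀ne x)
    exact absurd h0 (isOpen_interior.measure_pos volume hint).ne'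
  obtain ⟨g, hgne, hgu, hgp⟩ : ∃ g : Euc 2 →L[ℝ] ℝ, g ≠ 0 ∧ g u0 = 0 ∧ 0 < g (p - x) := by
    rcases lt_or_gt_of_ne hgp0 with h | h
    · exact ⟨-g₀, neg_ne_zero.2 hg₀ne, by simp [hg₀u], by simpa using h⟩
    · exact ⟨g₀, hg₀ne, hg₀u, h⟩
  have hpS : p ∈ S := interior_subset hpint
  set G : ℝ := g (p - x) with hG
  set C : ℝ := ‖g‖ with hC
  have hCnn : 0 ≤ C := norm_nonneg _
  have hu0n : 0 < ‖u0‖ := norm_pos_iff.2 hu0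
  set K : ℝ := 2 * (1 + C * ‖p - x‖ / G) with hK
  have hKpos : 0 < K := by
    have : 0 ≤ C * ‖p - x‖ / G := by positivity
    rw [hK]; linarith
  set r0 : ℝ := min (G / (2 * (C + 1))) (min tb (1 - tb) * ‖u0‖ / K) with hr0
  have htb1 : tb < 1 := by linarith
  have hminpos : 0 < min tb (1 - tb) := lt_min htb (by linarith)
  have hr0pos : 0 < r0 := lt_min (by positivity) (by positivity)
  refine ⟨g, r0, hgne, hr0pos, ?_⟩
  intro y hdist hgy
  set t : ℝ := g (y - x) / G with ht
  have htnn : 0 ≤ t := by positivity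
  have hgyb : g (y - x) ≤ C * ‖y - x‖ := by
    calc g (y - x) ≤ |g (y - x)| := le_abs_self _
      _ ≤ C * ‖y - x‖ := by rw [hC]; exact g.le_opNorm _
  have hyx : ‖y - x‖ < r0 := by rwa [dist_eq_norm] at hdist
  have ht12 : t ≤ 1 / 2 := by
    rw [ht, div_le_iff₀ hgp]
    have h1 : ‖y - x‖ ≤ G / (2 * (C + 1)) := le_trans hyx.le (min_le_left _ _)
    have h2 : C * ‖y - x‖ ≤ C * (G / (2 * (C + 1))) :=
      mul_le_mul_of_nonneg_left h1 hCnn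
    have h3 : C * (G / (2 * (C + 1))) ≤ 1 / 2 * G := by
      rw [mul_div_assoc']
      rw [div_le_iff₀ (by positivity)]
      nlinarith
    linarith
  have ht1 : t < 1 := by linarith
  set q : Euc 2 := x + (1 - t)⁻¹ • ((y - x) - t • (p - x)) with hq
  have hgq : g (q - x) = 0 := by
    have hinner : g (y - x) - t * G = 0 := by
      rw [ht]; field_simp; ring
    rw [hq, add_sub_cancel_left, g.map_smul, map_sub, g.map_smul, smul_eq_mul, smul_eq_mul,
      ← hG, hinner, mul_zero]
  obtain ⟨c, hc⟩ := ker_eq_span g u0 hu0 hgu ⟨p - x, hgp.ne'⟩ (q - x) hgq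
  -- bound |c|
  have hqn : ‖q - x‖ ≤ 2 * (‖y - x‖ + t * ‖p - x‖) := by
    rw [hq, add_sub_cancel_left, norm_smul]
    have h1 : ‖(1 - t)⁻¹‖ = (1 - t)⁻¹ := Real.norm_of_nonneg (by
      have h0 : (0:ℝ) < 1 - t := by linarith
      positivity)
    have h2 : (1 - t)⁻¹ ≤ 2 := by
      rw [inv_le_comm₀ (by linarith) (by norm_num)]
      linarith
    have h3 : ‖y - x - t • (p - x)‖ ≤ ‖y - x‖ + t * ‖p - x‖ := by
      calc ‖y - x - t • (p - x)‖ ≤ ‖y - x‖ + ‖t • (p - x)‖ := norm_sub_le _ _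
        _ = ‖y - x‖ + t * ‖p - x‖ := by rw [norm_smul, Real.norm_of_nonneg htnn]
    rw [h1]
    calc (1 - t)⁻¹ * ‖y - x - t • (p - x)‖ ≤ 2 * ‖y - x - t • (p - x)‖ := by
          apply mul_le_mul_of_nonneg_right h2 (norm_nonneg _)
      _ ≤ 2 * (‖y - x‖ + t * ‖p - x‖) := by linarith
  have htle : t * ‖p - x‖ ≤ C * ‖y - x‖ * ‖p - x‖ / G := by
    rw [ht]
    rw [div_mul_eq_mul_div, div_le_div_iff₀ hgp hgp]
    nlinarith [norm_nonneg (p - x), mul_le_mul_of_nonneg_right hgyb (norm_nonneg (p - x))]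
  have hqn2 : ‖q - x‖ ≤ K * ‖y - x‖ := by
    have : 2 * (‖y - x‖ + C * ‖y - x‖ * ‖p - x‖ / G) = K * ‖y - x‖ := by
      rw [hK]; field_simp
    calc ‖q - x‖ ≤ 2 * (‖y - x‖ + t * ‖p - x‖) := hqn
      _ ≤ 2 * (‖y - x‖ + C * ‖y - x‖ * ‖p - x‖ / G) := by linarith
      _ = K * ‖y - x‖ := this
  have hcb : |c| ≤ min tb (1 - tb) := by
    have h1 : |c| * ‖u0‖ = ‖q - x‖ := by rw [hc, norm_smul, Real.norm_eq_abs]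
    have h2 : ‖q - x‖ ≤ K * (min tb (1 - tb) * ‖u0‖ / K) := by
      calc ‖q - x‖ ≤ K * ‖y - x‖ := hqn2
        _ ≤ K * (min tb (1 - tb) * ‖u0‖ / K) := by
            apply mul_le_mul_of_nonneg_left _ hKpos.le
            exact le_trans hyx.le (min_le_right _ _)
    have h3 : K * (min tb (1 - tb) * ‖u0‖ / K) = min tb (1 - tb) * ‖u0‖ := by
      field_simp
    rw [h3] at h2
    rw [← h1] at h2
    exact le_of_mul_le_mul_right (by linarith) hu0n
  -- q ∈ segment a b ⊆ S
  have hqS : q ∈ S := by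
    have hq2 : q = a + (tb + c) • u0 := by
      have : q = x + c • u0 := by
        rw [show q = x + (q - x) by abel, hc]
      rw [this, hxa]
      module
    have hmem : q ∈ segment ℝ a b := by
      rw [segment_eq_image']
      refine ⟨tb + c, ?_, hq2.symm⟩
      constructor
      · have := abs_le.1 hcb
        have h4 : min tb (1 - tb) ≤ tb := min_le_left _ _
        linarith [this.1]
      · have := abs_le.1 hcb
        have h4 : min tb (1 - tb) ≤ 1 - tb := min_le_right _ _
        linarith [this.2]
    exact hS.segment_subset ha hb hmem
  -- y = (1-t) • q + t • p ∈ S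
  have hy : y = (1 - t) • q + t • p := by
    rw [hq, smul_add, smul_smul]
    rw [mul_inv_cancel₀ (by linarith : (1:ℝ) - t ≠ 0), one_smul]
    module
  rw [hy]
  exact hS hqS hpS (by linarith) htnn (by ring)

lemma near_interior (S : Set (Euc 2)) (hS : Convex ℝ S) (p : Euc 2) (hp : p ∈ interior S)
    (x : Euc 2) (hx : x ∈ S) (ε : ℝ) (hε : 0 < ε) :
    ∃ z, z ∈ interior S ∧ dist z x < ε := by
  set θ : ℝ := min 1 (ε / (‖p - x‖ + 1)) with hθ
  have hnp : (0:ℝ) ≤ ‖p - x‖ := norm_nonneg _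
  have hθpos : 0 < θ := lt_min one_pos (by positivity)
  have hθ1 : θ ≤ 1 := min_le_left _ _
  have hθ2 : θ ≤ ε / (‖p - x‖ + 1) := min_le_right _ _
  refine ⟨θ • p + (1 - θ) • x, ?_, ?_⟩
  · exact hS.combo_interior_self_mem_interior hp hx hθpos (by linarith) (by ring)
  · have hzx : θ • p + (1 - θ) • x - x = θ • (p - x) := by module
    rw [dist_eq_norm, hzx, norm_smul, Real.norm_of_nonneg hθpos.le]
    have h1 : θ * ‖p - x‖ ≤ (ε / (‖p - x‖ + 1)) * ‖p - x‖ :=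
      mul_le_mul_of_nonneg_right hθ2 hnp
    have h2 : (ε / (‖p - x‖ + 1)) * ‖p - x‖ < ε := by
      rw [div_mul_eq_mul_div, div_lt_iff₀ (by positivity)]
      nlinarith
    linarith

lemma boundary_upper (S : Set (Euc 2)) (hS : Convex ℝ S) (hint : (interior S).Nonempty)
    (x : Euc 2) (hxi : x ∉ interior S) (r : ℝ) :
    2 * volume (S ∩ ball x r) ≤ volume (ball x r) := by
  obtain ⟨f, hfsep⟩ := geometric_hahn_banach_open_point (hS.interior) isOpen_interior hxi
  obtain ⟨p, hp⟩ := hint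
  have hf : f ≠ 0 := by
    intro h0
    have := hfsep p hp
    rw [h0] at this
    simp at this
  have hSsub : S ⊆ {y | f (y - x) ≤ 0} := by
    intro y hy
    have hyc : y ∈ closure (interior S) := by
      -- every neighborhood of y meets interior S
      rw [_root_.mem_closure_iff]
      intro o ho hyo
      obtain ⟨ε, hε, hball⟩ := Metric.isOpen_iff.1 ho y hyo
      obtain ⟨z, hz1, hz2⟩ := near_interior S hS p hp y hy ε hε
      exact ⟨z, hball (mem_ball.2 hz2), hz1⟩
    have hclosed : IsClosed {z : Euc 2 | f z ≤ f x} := isClosed_le (by fun_prop) continuous_const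
    have hsub2 : closure (interior S) ⊆ {z | f z ≤ f x} :=
      closure_minimal (fun z hz => (hfsep z hz).le) hclosed
    have := hsub2 hyc
    simp only [mem_setOf_eq] at this ⊢
    rw [map_sub]
    linarith
  calc 2 * volume (S ∩ ball x r) ≤ 2 * volume (ball x r ∩ {y | f (y - x) ≤ 0}) :=
        mul_le_mul_right (measure_mono (fun y hy =>
          mem_inter hy.2 (hSsub hy.1))) 2
    _ = volume (ball x r) := half_meas f hf x r

/-- In a locally finite tiling of the plane by convex polygons, every vertex of a
polygon of the tiling is a vertex of at least one other polygon of the tiling. -/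
theorem no_lonely_vertex_plane (𝒯 : Set (Set (Euc 2)))
    (h𝒯 : IsTiling 𝒯) (hlf : IsLocallyFinite 𝒯)
    (x : Euc 2) (T : Set (Euc 2)) (hT : T ∈ 𝒯) (hx : x ∈ extremePoints ℝ T) :
    ∃ T' ∈ 𝒯, T' ≠ T ∧ x ∈ extremePoints ℝ T' := by
  classical
  by_contra hcon
  push_neg at hcon
  obtain ⟨htiles, hcover, hdisj⟩ := h𝒯
  have hxT : x ∈ T := hx.1
  have hconv : ∀ S ∈ 𝒯, Convex ℝ S := by
    intro S hS
    obtain ⟨V, hV⟩ := (htiles S hS).1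
    rw [hV]; exact convex_convexHull ℝ _
  have hclosed : ∀ S ∈ 𝒯, IsClosed S := by
    intro S hS
    obtain ⟨V, hV⟩ := (htiles S hS).1
    rw [hV]; exact (V.finite_toSet.isCompact_convexHull ℝ).isClosed
  -- per-tile radius function
  have hrad : ∀ S : Set (Euc 2), ∃ ρ : ℝ, 0 < ρ ∧
      (S ∈ 𝒯 → S ≠ T →
        ((x ∉ S → S ∩ ball x ρ = ∅) ∧
         (x ∈ S → ∀ r, 0 < r → r < ρ →
            volume (ball x r) ≤ 2 * volume (S ∩ ball x r)))) := by
    intro S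
    by_cases h1 : S ∈ 𝒯 ∧ S ≠ T
    · obtain ⟨hS𝒯, hSne⟩ := h1
      by_cases h2 : x ∈ S
      · have hxe : x ∉ extremePoints ℝ S := hcon S hS𝒯 hSne
        obtain ⟨g, r0, hg, hr0, hsub⟩ :=
          nonvertex_halfplane S (hconv S hS𝒯) (htiles S hS𝒯).2 x h2 hxe
        refine ⟨r0, hr0, fun _ _ => ⟨fun hx' => absurd h2 hx', fun _ r hr hrr0 => ?_⟩⟩
        have hhalf := half_meas (-g) (neg_ne_zero.2 hg) x r
        calc volume (ball x r)
            = 2 * volume (ball x r ∩ {y | (-g) (y - x) ≤ 0}) := hhalf.symm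
          _ ≤ 2 * volume (S ∩ ball x r) := by
              refine mul_le_mul_right (measure_mono fun y hy => ?_) 2
              have h3 : (0:ℝ) ≤ g (y - x) := by
                have := hy.2
                simp only [mem_setOf_eq, ContinuousLinearMap.neg_apply] at this
                linarith
              have h4 : dist y x < r0 := lt_trans (mem_ball.1 hy.1) hrr0
              exact mem_inter (hsub y h4 h3) hy.1
      · have hSnonempty : S.Nonempty := ((htiles S hS𝒯).2).mono interior_subset |>.mono (by rfl)
        have hpos : 0 < infDist x S :=
          ((hclosed S hS𝒯).notMem_iff_infDist_pos
            (Nonempty.mono interior_subset (htiles S hS𝒯).2)).1 h2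
        refine ⟨infDist x S, hpos, fun _ _ => ⟨fun _ => ?_, fun hx' => absurd hx' h2⟩⟩
        ext y
        simp only [mem_inter_iff, mem_ball, mem_empty_iff_false, iff_false, not_and]
        intro hyS hyb
        have h5 : infDist x S ≤ dist x y := infDist_le_dist_of_mem hyS
        rw [dist_comm] at h5
        linarith
    · exact ⟨1, one_pos, fun hS hne => absurd ⟨hS, hne⟩ h1⟩
  choose ρ hρpos hρ using hrad
  -- finite set of tiles meeting unit ball
  have hF1 : {S | S ∈ 𝒯 ∧ (S ∩ ball x 1).Nonempty}.Finite := hlf _ isBounded_ball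
  set F : Finset (Set (Euc 2)) := hF1.toFinset with hF
  have hTF : T ∈ F := by
    rw [hF, Set.Finite.mem_toFinset]
    exact ⟨hT, ⟨x, hxT, mem_ball_self one_pos⟩⟩
  have hFne : F.Nonempty := ⟨T, hTF⟩
  set r : ℝ := min (1/2) (F.inf' hFne ρ / 2) with hr
  have hinfpos : 0 < F.inf' hFne ρ := (Finset.lt_inf'_iff hFne).2 fun S _ => hρpos S
  have hrpos : 0 < r := lt_min (by norm_num) (by positivity)
  have hr1 : r < 1 := lt_of_le_of_lt (min_le_left _ _) (by norm_num)
  have hrρ : ∀ S ∈ F, r < ρ S := by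
    intro S hS
    calc r ≤ F.inf' hFne ρ / 2 := min_le_right _ _
      _ < F.inf' hFne ρ := by linarith
      _ ≤ ρ S := Finset.inf'_le ρ hS
  -- tiles meeting ball x r
  have hG : {S | S ∈ 𝒯 ∧ (S ∩ ball x r).Nonempty}.Finite := hlf _ isBounded_ball
  set Gf : Finset (Set (Euc 2)) := hG.toFinset with hGf
  have hGmem : ∀ S, S ∈ Gf ↔ S ∈ 𝒯 ∧ (S ∩ ball x r).Nonempty := by
    intro S; rw [hGf, Set.Finite.mem_toFinset]; rfl
  have hGsubF : ∀ S ∈ Gf, S ∈ F := by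
    intro S hS
    obtain ⟨hS𝒯, ⟨y, hy1, hy2⟩⟩ := (hGmem S).1 hS
    rw [hF, Set.Finite.mem_toFinset]
    exact ⟨hS𝒯, ⟨y, hy1, mem_ball.2 (lt_trans (mem_ball.1 hy2) hr1)⟩⟩
  have hTG : T ∈ Gf := (hGmem T).2 ⟨hT, ⟨x, hxT, mem_ball_self hrpos⟩⟩
  -- null intersections between distinct tiles
  have hnull : ∀ S ∈ 𝒯, ∀ S' ∈ 𝒯, S ≠ S' → volume (S ∩ S') = 0 := by
    intro S hS S' hS' hne
    have hsub : S ∩ S' ⊆ frontier S ∪ frontier S' := by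
      intro y ⟨hy1, hy2⟩
      by_cases hyi : y ∈ interior S
      · by_cases hyi' : y ∈ interior S'
        · exact absurd (mem_inter hyi hyi') (by rw [hdisj S hS S' hS' hne]; simp)
        · right
          rw [(hclosed S' hS').frontier_eq]
          exact ⟨hy2, hyi'⟩
      · left
        rw [(hclosed S hS).frontier_eq]
        exact ⟨hy1, hyi⟩
    refine measure_mono_null hsub (measure_union_null ?_ ?_)
    · exact Convex.addHaar_frontier volume (hconv S hS)
    · exact Convex.addHaar_frontier volume (hconv S' hS')
  -- sum identity
  have hcoverball : ball x r = ⋃ S ∈ Gf, (S ∩ ball x r) := by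
    apply Subset.antisymm
    · intro y hy
      have : y ∈ ⋃₀ 𝒯 := by rw [hcover]; trivial
      obtain ⟨S, hS𝒯, hyS⟩ := this
      have hSG : S ∈ Gf := (hGmem S).2 ⟨hS𝒯, ⟨y, hyS, hy⟩⟩
      exact mem_biUnion hSG (mem_inter hyS hy)
    · exact iUnion₂_subset fun S _ => inter_subset_right
  have hsum : volume (ball x r) = ∑ S ∈ Gf, volume (S ∩ ball x r) := by
    conv_lhs => rw [hcoverball]
    apply measure_biUnion_finset₀
    · intro S hS S' hS' hne
      have hS𝒯 := ((hGmem S).1 (by simpa using hS)).1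
      have hS'𝒯 := ((hGmem S').1 (by simpa using hS')).1
      exact measure_mono_null (fun y hy => mem_inter hy.1.1 hy.2.1) (hnull S hS𝒯 S' hS'𝒯 hne)
    · intro S hS
      have hS𝒯 := ((hGmem S).1 hS).1
      exact ((hclosed S hS𝒯).measurableSet.inter isOpen_ball.measurableSet).nullMeasurableSet
  -- split off T
  rw [← Finset.add_sum_erase _ _ hTG] at hsum
  -- each other tile meeting the ball contributes exactly half
  have heach : ∀ S ∈ Gf.erase T, 2 * volume (S ∩ ball x r) = volume (ball x r) := by
    intro S hS
    have hSne : S ≠ T := Finset.ne_of_mem_erase hS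
    have hSG : S ∈ Gf := Finset.mem_of_mem_erase hS
    obtain ⟨hS𝒯, hSmeet⟩ := (hGmem S).1 hSG
    have hSF : S ∈ F := hGsubF S hSG
    have hxS : x ∈ S := by
      by_contra hxS
      have hempty := (hρ S hS𝒯 hSne).1 hxS
      obtain ⟨y, hy1, hy2⟩ := hSmeet
      have hmem : y ∈ S ∩ ball x (ρ S) :=
        ⟨hy1, mem_ball.2 (lt_trans (mem_ball.1 hy2) (hrρ S hSF))⟩
      rw [hempty] at hmem
      exact hmem
    have hlow := (hρ S hS𝒯 hSne).2 hxS r hrpos (hrρ S hSF)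
    have hxi : x ∉ interior S := by
      intro hxi
      obtain ⟨ε, hε, hball⟩ := Metric.isOpen_iff.1 isOpen_interior x hxi
      obtain ⟨p, hp⟩ := (htiles T hT).2
      obtain ⟨z, hz1, hz2⟩ := near_interior T (hconv T hT) p hp x hxT ε hε
      have hmem : z ∈ interior T ∩ interior S := ⟨hz1, hball (mem_ball.2 hz2)⟩
      rw [hdisj T hT S hS𝒯 (Ne.symm hSne)] at hmem
      exact hmem
    have hup := boundary_upper S (hconv S hS𝒯) (htiles S hS𝒯).2 x hxi r
    exact le_antisymm hup hlow
  -- strict bound for T at its vertex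
  obtain ⟨V, hV⟩ := (htiles T hT).1
  have hstrict : 2 * volume (T ∩ ball x r) < volume (ball x r) := by
    rw [hV]
    exact vertex_meas V x (by rw [← hV]; exact hx)
      (by rw [← hV]; exact (htiles T hT).2) r hrpos
  -- positivity
  have hTpos : 0 < volume (T ∩ ball x r) := by
    obtain ⟨p, hp⟩ := (htiles T hT).2
    obtain ⟨z, hz1, hz2⟩ := near_interior T (hconv T hT) p hp x hxT r hrpos
    have hopen : IsOpen (interior T ∩ ball x r) := isOpen_interior.inter isOpen_ball
    have hne : (interior T ∩ ball x r).Nonempty := ⟨z, hz1, mem_ball.2 hz2⟩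
    exact lt_of_lt_of_le (hopen.measure_pos volume hne)
      (measure_mono fun y hy => ⟨interior_subset hy.1, hy.2⟩)
  -- arithmetic in ℝ≥0∞
  set m := volume (ball x r) with hm
  set a := volume (T ∩ ball x r) with ha
  have hmfin : m ≠ ⊤ := measure_ball_lt_top.ne
  have key : 2 * m = 2 * a + (Gf.erase T).card • m := by
    calc 2 * m = 2 * (a + ∑ S ∈ Gf.erase T, volume (S ∩ ball x r)) := by rw [← hsum]
      _ = 2 * a + ∑ S ∈ Gf.erase T, 2 * volume (S ∩ ball x r) := by
          rw [mul_add, Finset.mul_sum]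
      _ = 2 * a + ∑ _S ∈ Gf.erase T, m := by rw [Finset.sum_congr rfl heach]
      _ = 2 * a + (Gf.erase T).card • m := by rw [Finset.sum_const]
  have h2a0 : 2 * a ≠ 0 := by
    simp only [ne_eq, mul_eq_zero]
    push_neg
    exact ⟨by norm_num, hTpos.ne'⟩
  have h2mfin : 2 * m ≠ ⊤ := ENNReal.mul_ne_top (by norm_num) hmfin
  generalize hk : (Gf.erase T).card = k at key
  rcases k with _ | _ | n
  · rw [zero_nsmul, add_zero] at key
    have hle : m ≤ 2 * m := by rw [two_mul]; exact le_self_add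
    rw [key] at hle
    exact absurd hstrict (not_lt.2 hle)
  · rw [one_nsmul] at key
    have h1 : m + m = m + 2 * a := by rw [← two_mul, key, add_comm]
    have h2 : m = 2 * a := (ENNReal.add_right_inj hmfin).1 h1
    rw [← h2] at hstrict
    exact lt_irrefl m hstrict
  · have h1 : (n + 2) • m = n • m + 2 * m := by rw [add_nsmul, two_nsmul, two_mul]
    rw [h1, ← add_assoc] at key
    have h2 : 2 * m + (2 * a + n • m) = 2 * m + 0 := by
      rw [add_zero, add_comm]
      exact key.symm
    have h3 : 2 * a + n • m = 0 := (ENNReal.add_right_inj h2mfin).1 h2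
    exact h2a0 (add_eq_zero.1 h3).1
end
end

section
/- Let P be an n-dimensional convex polytope in ℝⁿ and x a vertex of P. Then for sufficiently small r > 0, the spherical set (radial projection of P ∩ S(x,r) onto S(x,r)) contains no pair of antipodal points of the sphere S(x,r); conversely, if x ∈ P is not a vertex of P, then for all sufficiently small r > 0 this spherical set contains a pair of antipodal points of S(x,r). -/
open Set Metric

noncomputable section

/-- Let `P` be an `n`-dimensional convex polytope and `x ∈ P`. If `x` is a vertex of `P`
then, for all sufficiently small `r > 0`, the spherical set `P ∩ S(x,r)` contains no
pair of antipodal points of `S(x,r)`; if `x` is not a vertex of `P` then, for all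
sufficiently small `r > 0`, it does contain a pair of antipodal points. -/
theorem vertex_iff_no_antipodal {n : ℕ} (P : Set (Euc n)) (hP : IsPolytope P)
    (hfull : (interior P).Nonempty) (x : Euc n) (hx : x ∈ P) :
    (x ∈ extremePoints ℝ P →
      ∃ r₀ > 0, ∀ r : ℝ, 0 < r → r < r₀ →
        ¬ ∃ y ∈ P ∩ Metric.sphere x r, (2 : ℝ) • x - y ∈ P ∩ Metric.sphere x r) ∧
    (x ∉ extremePoints ℝ P →
      ∃ r₀ > 0, ∀ r : ℝ, 0 < r → r < r₀ →
        ∃ y ∈ P ∩ Metric.sphere x r, (2 : ℝ) • x - y ∈ P ∩ Metric.sphere x r) := by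
  have hconv : Convex ℝ P := by
    obtain ⟨V, rfl⟩ := hP
    exact convex_convexHull ℝ _
  constructor
  · intro hext
    refine ⟨1, one_pos, fun r hr _ h => ?_⟩
    obtain ⟨y, ⟨hyP, hyS⟩, hzP, hzS⟩ := h
    have hyx : y ≠ x := by
      intro h
      rw [h, mem_sphere, dist_self] at hyS
      exact hr.ne hyS
    have hmem : x ∈ openSegment ℝ y ((2:ℝ) • x - y) := by
      refine ⟨1/2, 1/2, by norm_num, by norm_num, by norm_num, ?_⟩
      module
    exact hyx (hext.2 hyP hzP hmem)
  · intro hnext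
    rw [mem_extremePoints] at hnext
    push_neg at hnext
    obtain ⟨y, hyP, z, hzP, hseg, hne⟩ := hnext hx
    obtain ⟨a, b, ha, hb, hab, hxeq⟩ := hseg
    have hyx : y ≠ x := by
      rintro rfl
      refine hne rfl ?_
      have h1 : b • z = b • y := by
        calc b • z = (a • y + b • z) - a • y := by module
          _ = y - a • y := by rw [hxeq]
          _ = (1 - a) • y := by module
          _ = b • y := by rw [show (1 : ℝ) - a = b by linarith]
      exact smul_right_injective (Euc n) hb.ne' h1
    have hzx : z ≠ x := by
      rintro rfl
      exfalso
      have h1 : a • y = a • z := by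
        calc a • y = (a • y + b • z) - b • z := by module
          _ = z - b • z := by rw [hxeq]
          _ = (1 - b) • z := by module
          _ = a • z := by rw [show (1 : ℝ) - b = a by linarith]
      exact hne (smul_right_injective (Euc n) ha.ne' h1) rfl
    set d := ‖y - x‖ with hd
    set e := ‖z - x‖ with he
    have hd0 : 0 < d := by
      rw [hd, norm_pos_iff, sub_ne_zero]
      exact hyx
    have he0 : 0 < e := by
      rw [he, norm_pos_iff, sub_ne_zero]
      exact hzx
    -- key identity: b • (z - x) = a • (x - y)
    have hkey : b • (z - x) = a • (x - y) := by
      have : a • y + b • z = x := hxeq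
      have hx1 : ((a + b) : ℝ) • x = x := by rw [hab, one_smul]
      calc b • (z - x) = (a • y + b • z) - a • y - b • x := by module
        _ = x - a • y - b • x := by rw [hxeq]
        _ = (a + b) • x - a • y - b • x := by rw [hx1]
        _ = a • (x - y) := by module
    have hed : e = (a / b) * d := by
      have : ‖b • (z - x)‖ = ‖a • (x - y)‖ := by rw [hkey]
      rw [norm_smul, norm_smul, Real.norm_eq_abs, Real.norm_eq_abs,
        abs_of_pos ha, abs_of_pos hb, norm_sub_rev x y] at this
      field_simp
      linarith [this]
    refine ⟨min d e, lt_min hd0 he0, fun r hr hrlt => ?_⟩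
    have hrd : r < d := lt_of_lt_of_le hrlt (min_le_left _ _)
    have hre : r < e := lt_of_lt_of_le hrlt (min_le_right _ _)
    refine ⟨x + (r / d) • (y - x), ⟨?_, ?_⟩, ?_, ?_⟩
    · exact hconv.add_smul_sub_mem hx hyP
        ⟨by positivity, le_of_lt (by rw [div_lt_one hd0]; exact hrd)⟩
    · rw [mem_sphere]
      have : dist (x + (r / d) • (y - x)) x = ‖(r / d) • (y - x)‖ := by
        rw [dist_eq_norm]; ring_nf; congr 1; abel
      rw [this, norm_smul, Real.norm_eq_abs, abs_of_pos (by positivity), ← hd]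
      field_simp
    · have hq : (2 : ℝ) • x - (x + (r / d) • (y - x)) =
          x + ((r * b) / (d * a)) • (z - x) := by
        have : ((r * b) / (d * a)) • (z - x)
            = ((r / (d * a)) * b) • (z - x) := by ring_nf
        rw [this, mul_smul, hkey, smul_smul]
        have ha' : a ≠ 0 := ha.ne'
        have : r / (d * a) * a = r / d := by field_simp
        rw [this]
        module
      rw [hq]
      refine hconv.add_smul_sub_mem hx hzP ⟨by positivity, ?_⟩
      rw [div_le_one (by positivity)]
      have : e * b = a * d := by rw [hed]; field_simp
      nlinarith
    · rw [mem_sphere]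
      have : (2 : ℝ) • x - (x + (r / d) • (y - x)) - x = -((r / d) • (y - x)) := by
        module
      rw [dist_eq_norm, this, norm_neg, norm_smul, Real.norm_eq_abs,
        abs_of_pos (by positivity), ← hd]
      field_simp
end
end
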